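/- arXiv:2301.07873 — 5 statements merged into one kernel-verified Lean document; each statement's English description precedes it below -/
import Mathlib

section
/- Corollary of Theorem B: Let d ∈ ℕ and let p_1, …, p_d be integral polynomials with p_i(0) = 0 for 1 ≤ i ≤ d. If S ⊆ ℤ is piecewise syndetic, then the set {n ∈ ℤ : there exists m ∈ ℤ such that m + p_1(n) ∈ S, m + p_2(n) ∈ S, …, m + p_d(n) ∈ S} is piecewise syndetic in ℤ. -/
/-- A subset of ℤ is thick if it contains arbitrarily long intervals of
consecutive integers. -/
def ThickZ (S : Set ℤ) : Prop :=
  ∀ L : ℕ, ∃ a : ℤ, ∀ k : ℕ, k ≤ L → a + (k : ℤ) ∈ S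

/-- A subset `S` of ℤ is piecewise syndetic if there is `N ∈ ℕ` such that
`⋃_{i=1}^{N} (S - i)` is thick. -/
def PiecewiseSyndeticZ (S : Set ℤ) : Prop :=
  ∃ N : ℕ, ThickZ {x : ℤ | ∃ i : ℕ, 1 ≤ i ∧ i ≤ N ∧ x + (i : ℤ) ∈ S}

/-- A subset of ℤ² is thick if it contains a shifted copy of every finite subset of ℤ². -/
def ThickZ2 (S : Set (ℤ × ℤ)) : Prop :=
  ∀ F : Finset (ℤ × ℤ), ∃ g : ℤ × ℤ, ∀ f ∈ F, g + f ∈ S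

/-- A subset `S` of ℤ² is piecewise syndetic if there is a finite set `F ⊆ ℤ²` such
that `⋃_{g ∈ F} (S - g)` is thick. -/
def PiecewiseSyndeticZ2 (S : Set (ℤ × ℤ)) : Prop :=
  ∃ F : Finset (ℤ × ℤ), ThickZ2 {x : ℤ × ℤ | ∃ g ∈ F, x + g ∈ S}

/-- An integral polynomial: a function ℤ → ℤ agreeing with a polynomial with
rational coefficients. -/
def IsIntPoly (p : ℤ → ℤ) : Prop :=
  ∃ q : Polynomial ℚ, ∀ n : ℤ, q.eval (n : ℚ) = (p n : ℚ)

open Filter Polynomial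
set_option linter.unusedSectionVars false
set_option linter.unusedVariables false
set_option maxHeartbeats 1600000

namespace CorB


variable {A : Type} [Fintype A] [DecidableEq A] [Nonempty A]

/-! ### Ultralimits of sequences of colorings -/

lemma ulim_ex (p : Ultrafilter ℕ) (f : ℕ → A) : ∃ a : A, {k | f k = a} ∈ p := by
  by_contra h
  push_neg at h
  have h2 : ∀ a : A, {k | f k ≠ a} ∈ p := by
    intro a
    have := (Ultrafilter.compl_mem_iff_notMem (s := {k | f k = a}) (f := p)).2 (h a)
    simpa [Set.compl_setOf] using this
  have h3 : (∀ᶠ k in (p : Filter ℕ), ∀ a : A, f k ≠ a) := by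
    rw [Filter.eventually_all]
    exact h2
  rcases h3.exists with ⟨k, hk⟩
  exact hk (f k) rfl

noncomputable def ulim (p : Ultrafilter ℕ) (w : ℕ → ℤ → A) (v : ℤ) : A :=
  (ulim_ex p (fun k => w k v)).choose

lemma ulim_mem (p : Ultrafilter ℕ) (w : ℕ → ℤ → A) (v : ℤ) :
    {k | w k v = ulim p w v} ∈ p :=
  (ulim_ex p (fun k => w k v)).choose_spec

lemma ulim_agree (p : Ultrafilter ℕ) (w : ℕ → ℤ → A) (G : Finset ℤ) :
    {k | ∀ v ∈ G, w k v = ulim p w v} ∈ p := by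
  have : (∀ᶠ k in (p : Filter ℕ), ∀ v ∈ G, w k v = ulim p w v) := by
    rw [Filter.eventually_all_finset]
    intro v _
    exact ulim_mem p w v
  exact this

/-! ### Patterns, shifts, occurrences -/

/-- shift: `(sh a z) v = z (v + a)`. -/
def sh (a : ℤ) (z : ℤ → A) : ℤ → A := fun v => z (v + a)

lemma sh_sh (a b : ℤ) (z : ℤ → A) : sh a (sh b z) = sh (a + b) z := by
  funext v; simp [sh, add_assoc]

/-- every central pattern of `z` occurs somewhere in `χ`. -/
def PatIn (z χ : ℤ → A) : Prop :=
  ∀ W : ℕ, ∃ t : ℤ, ∀ v : ℤ, |v| ≤ (W : ℤ) → z v = χ (t + v)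

lemma patIn_refl (z : ℤ → A) : PatIn z z := fun W => ⟨0, fun v _ => by simp⟩

lemma patIn_shift (a : ℤ) {z χ : ℤ → A} (h : PatIn z χ) : PatIn (sh a z) χ := by
  intro W
  obtain ⟨t, ht⟩ := h (W + a.natAbs)
  refine ⟨t + a, fun v hv => ?_⟩
  have : z (v + a) = χ (t + (v + a)) := by
    apply ht
    have : |v + a| ≤ |v| + |a| := abs_add_le _ _
    have h2 : |a| = (a.natAbs : ℤ) := (Int.abs_eq_natAbs a)
    push_cast
    omega
  simpa [sh, add_assoc, add_comm, add_left_comm] using this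

lemma patIn_trans {x ψ χ : ℤ → A} (h1 : PatIn x ψ) (h2 : PatIn ψ χ) : PatIn x χ := by
  intro W
  obtain ⟨t1, ht1⟩ := h1 W
  obtain ⟨t2, ht2⟩ := h2 (W + t1.natAbs)
  refine ⟨t2 + t1, fun v hv => ?_⟩
  rw [ht1 v hv]
  have : ψ (t1 + v) = χ (t2 + (t1 + v)) := by
    apply ht2
    have : |t1 + v| ≤ |t1| + |v| := abs_add_le _ _
    have h2 : |t1| = (t1.natAbs : ℤ) := (Int.abs_eq_natAbs t1)
    push_cast
    omega
  rw [this]; ring_nf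

lemma patIn_ulim (p : Ultrafilter ℕ) (w : ℕ → ℤ → A) (χ : ℤ → A)
    (h : {k | PatIn (w k) χ} ∈ p) : PatIn (ulim p w) χ := by
  intro W
  have hfin : {k | ∀ v ∈ Finset.Icc (-(W:ℤ)) W, w k v = ulim p w v} ∈ p :=
    ulim_agree p w _
  obtain ⟨k, hk1, hk2⟩ := Ultrafilter.nonempty_of_mem (p.inter_mem h hfin)
  obtain ⟨t, ht⟩ := hk1 W
  refine ⟨t, fun v hv => ?_⟩
  rw [← hk2 v (by rw [Finset.mem_Icc]; constructor <;> [exact neg_le_of_abs_le hv; exact le_of_abs_le hv])]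
  exact ht v hv


/-! ### A uniformly recurrent coloring below χ -/

def Occ (χ : ℤ → A) (c : ℤ) (W : ℕ) (z : ℤ → A) (t : ℤ) : Prop :=
  ∀ v : ℤ, |v| ≤ (W:ℤ) → z (t + v) = χ (c + v)

open scoped Classical in
noncomputable def XX (χ : ℤ → A) : ℕ → Set (ℤ → A)
  | 0 => {z | PatIn z χ}
  | (k+1) =>
      if ∃ z ∈ XX χ k, ∀ t : ℤ, ¬ Occ χ (Denumerable.ofNat (ℤ × ℕ) k).1
          (Denumerable.ofNat (ℤ × ℕ) k).2 z t
      then {z | z ∈ XX χ k ∧ ∀ t : ℤ, ¬ Occ χ (Denumerable.ofNat (ℤ × ℕ) k).1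
          (Denumerable.ofNat (ℤ × ℕ) k).2 z t}
      else XX χ k

lemma XX_sub (χ : ℤ → A) (k : ℕ) : XX χ (k+1) ⊆ XX χ k := by
  rw [XX]
  split_ifs with h
  · intro z hz; exact hz.1
  · exact le_refl _

lemma XX_mono (χ : ℤ → A) {k k' : ℕ} (h : k ≤ k') : XX χ k' ⊆ XX χ k := by
  induction k' with
  | zero => simp_all
  | succ n ih =>
    rcases Nat.eq_or_lt_of_le h with h1 | h1
    · rw [h1]
    · exact fun z hz => ih (by omega) (XX_sub χ n hz)

lemma XX_patIn (χ : ℤ → A) (k : ℕ) {z : ℤ → A} (h : z ∈ XX χ k) : PatIn z χ :=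
  XX_mono χ (Nat.zero_le k) h

lemma XX_shift (χ : ℤ → A) (k : ℕ) {z : ℤ → A} (h : z ∈ XX χ k) (a : ℤ) :
    sh a z ∈ XX χ k := by
  induction k with
  | zero => exact patIn_shift a h
  | succ n ih =>
    rw [XX] at h ⊢
    split_ifs at h ⊢ with hbr
    · refine ⟨ih h.1, fun t ht => h.2 (t + a) (fun v hv => ?_)⟩
      have := ht v hv
      simpa [sh, add_assoc, add_comm, add_left_comm] using this
    · exact ih h

lemma XX_ulim (χ : ℤ → A) (k : ℕ) (p : Ultrafilter ℕ) (w : ℕ → ℤ → A)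
    (h : {j | w j ∈ XX χ k} ∈ p) : ulim p w ∈ XX χ k := by
  induction k with
  | zero => exact patIn_ulim p w χ h
  | succ n ih =>
    rw [XX]
    have hsub : {j | w j ∈ XX χ (n+1)} ⊆ {j | w j ∈ XX χ n} := fun j hj => XX_sub χ n hj
    split_ifs with hbr
    · refine ⟨ih (p.mem_of_superset h hsub), fun t ht => ?_⟩
      set c := (Denumerable.ofNat (ℤ × ℕ) n).1
      set W := (Denumerable.ofNat (ℤ × ℕ) n).2
      have hagree := ulim_agree p w (Finset.Icc (t - W) (t + W))
      obtain ⟨j, hj1, hj2⟩ := Ultrafilter.nonempty_of_mem (p.inter_mem h hagree)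
      rw [XX] at hj1
      rw [if_pos hbr] at hj1
      refine hj1.2 t (fun v hv => ?_)
      have h1 : w j (t + v) = ulim p w (t + v) := by
        apply hj2
        rw [Finset.mem_Icc]
        have := abs_le.mp hv
        omega
      rw [h1]
      exact ht v hv
    · exact ih (p.mem_of_superset h hsub)

lemma XX_ne (χ : ℤ → A) (k : ℕ) : (XX χ k).Nonempty := by
  induction k with
  | zero => exact ⟨χ, patIn_refl χ⟩
  | succ n ih =>
    rw [XX]
    split_ifs with hbr
    · obtain ⟨z, hz1, hz2⟩ := hbr
      exact ⟨z, hz1, hz2⟩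
    · exact ih

theorem exists_UR (χ : ℤ → A) : ∃ ψ : ℤ → A, PatIn ψ χ ∧
    ∀ (c : ℤ) (W : ℕ), ∃ K : ℕ, ∀ t : ℤ, ∃ s : ℤ, |s - t| ≤ (K:ℤ) ∧
      ∀ v : ℤ, |v| ≤ (W:ℤ) → ψ (s + v) = ψ (c + v) := by
  classical
  set p0 : Ultrafilter ℕ := hyperfilter ℕ with hp0
  have hcof : ∀ m : ℕ, {j : ℕ | m ≤ j} ∈ p0 := by
    intro m
    apply mem_hyperfilter_of_finite_compl
    have : {j : ℕ | m ≤ j}ᶜ ⊆ Set.Iio m := by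
      intro j hj; simp at hj ⊢; omega
    exact Set.Finite.subset (Set.finite_Iio m) this
  set zc : ℕ → ℤ → A := fun k => (XX_ne χ k).choose with hzc
  have hzcm : ∀ k, zc k ∈ XX χ k := fun k => (XX_ne χ k).choose_spec
  set ψ := ulim p0 zc with hψ
  have hmem : ∀ k, ψ ∈ XX χ k := by
    intro k
    apply XX_ulim χ k p0 zc
    apply p0.mem_of_superset (hcof k)
    intro j hj
    exact XX_mono χ hj (hzcm j)
  have hpat : PatIn ψ χ := XX_patIn χ 0 (hmem 0)
  refine ⟨ψ, hpat, fun c W => ?_⟩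
  -- central pattern of ψ at c occurs in χ at some c'
  obtain ⟨c', hc'⟩ := patIn_shift c hpat W
  simp only [sh] at hc'
  -- hc' : ∀ v, |v| ≤ W → ψ (v + c) = χ (c' + v)
  set k₀ : ℕ := Encodable.encode ((c', W) : ℤ × ℕ) with hk₀
  have hdec : Denumerable.ofNat (ℤ × ℕ) k₀ = (c', W) := by
    rw [hk₀, Denumerable.ofNat_encode]
  have hψk : ψ ∈ XX χ (k₀ + 1) := hmem _
  rw [XX] at hψk
  split_ifs at hψk with hbr
  on_goal 1 => simp only [hdec] at hψk
  · exfalso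
    refine hψk.2 c (fun v hv => ?_)
    have := hc' v hv
    rw [add_comm c v]
    exact this
  · -- every element of XX χ k₀ contains the pattern
    push_neg at hbr
    by_contra hcon
    push_neg at hcon
    -- hcon : ∀ K, ∃ t, ∀ s, |s - t| ≤ K → ∃ v, |v| ≤ W ∧ ψ (s+v) ≠ ψ (c+v)
    choose tf htf using hcon
    set w : ℕ → ℤ → A := fun K => sh (tf K) ψ with hw
    have hwk : ∀ K, w K ∈ XX χ k₀ := fun K => XX_shift χ k₀ (hmem k₀) (tf K)
    set z' := ulim p0 w with hz'
    have hz'm : z' ∈ XX χ k₀ := XX_ulim χ k₀ p0 w (by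
      apply p0.mem_of_superset Filter.univ_mem
      intro j _
      exact hwk j)
    rw [hdec] at hbr
    obtain ⟨ts, hts⟩ := hbr z' hz'm
    -- hts : Occ χ c' W z' ts
    have hagree := ulim_agree p0 w (Finset.Icc (ts - W) (ts + W))
    obtain ⟨K, hK1, hK2⟩ := Ultrafilter.nonempty_of_mem
      (p0.inter_mem hagree (hcof (ts.natAbs + W)))
    refine (htf K (tf K + ts) (by
      have h6 : ts.natAbs + W ≤ K := hK2
      have h5 : tf K + ts - tf K = ts := by ring
      rw [h5, Int.abs_eq_natAbs]
      omega)).elim (fun v hv => ?_)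
    apply hv.2
    have e1 : ψ (tf K + ts + v) = w K (ts + v) := by
      simp only [hw, sh]
      ring_nf
    have e2 : w K (ts + v) = z' (ts + v) := by
      apply hK1
      rw [Finset.mem_Icc]
      have := abs_le.mp hv.1
      omega
    have e3 : z' (ts + v) = χ (c' + v) := hts v hv.1
    have e4 : χ (c' + v) = ψ (c + v) := by
      rw [← hc' v hv.1, add_comm]
    rw [e1, e2, e3, e4]

/-- Hitting lemma: from uniform recurrence of ψ. -/
theorem hitting {ψ : ℤ → A}
    (hUR : ∀ (c : ℤ) (W : ℕ), ∃ K : ℕ, ∀ t : ℤ, ∃ s : ℤ, |s - t| ≤ (K:ℤ) ∧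
      ∀ v : ℤ, |v| ≤ (W:ℤ) → ψ (s + v) = ψ (c + v))
    (x : ℤ → A) (hx : PatIn x ψ) (Wh : ℕ) :
    ∃ K : ℕ, ∀ z : ℤ → A, PatIn z ψ → ∃ s : ℤ, |s| ≤ (K:ℤ) ∧
      ∀ v : ℤ, |v| ≤ (Wh:ℤ) → z (v + s) = x v := by
  obtain ⟨c, hc⟩ := hx Wh
  obtain ⟨K₀, hK₀⟩ := hUR c Wh
  refine ⟨K₀, fun z hz => ?_⟩
  obtain ⟨τ, hτ⟩ := hz (K₀ + Wh)
  obtain ⟨s', hs'1, hs'2⟩ := hK₀ τ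
  refine ⟨s' - τ, by simpa using hs'1, fun v hv => ?_⟩
  have h1 : z (v + (s' - τ)) = ψ (τ + (v + (s' - τ))) := by
    apply hτ
    have h2 := abs_le.mp hv
    have h3 := abs_le.mp (by simpa using hs'1 : |s' - τ| ≤ (K₀:ℤ))
    rw [abs_le]
    push_cast
    omega
  have h4 : τ + (v + (s' - τ)) = s' + v := by ring
  rw [h1, h4, hs'2 v hv, ← hc v hv]

/-! ### Integer-valued polynomials over ℚ -/

/-- integer-valued on ℤ -/
def IVP (q : ℚ[X]) : Prop := ∀ n : ℤ, ∃ m : ℤ, q.eval (n : ℚ) = (m : ℚ)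

noncomputable def ev (q : ℚ[X]) (n : ℤ) : ℤ := (q.eval (n : ℚ)).num

lemma ev_spec {q : ℚ[X]} (hq : IVP q) (n : ℤ) : ((ev q n : ℤ) : ℚ) = q.eval (n : ℚ) := by
  obtain ⟨m, hm⟩ := hq n
  rw [ev, hm]
  norm_num

/-- the derived polynomial: `n ↦ q (n + a) - q a - q* n`. -/
noncomputable def der (q qs : ℚ[X]) (a : ℤ) : ℚ[X] :=
  q.comp (X + C (a : ℚ)) - C (q.eval (a : ℚ)) - qs

lemma IVP.add {q r : ℚ[X]} (hq : IVP q) (hr : IVP r) : IVP (q + r) := by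
  intro n; obtain ⟨m1, h1⟩ := hq n; obtain ⟨m2, h2⟩ := hr n
  exact ⟨m1 + m2, by push_cast [eval_add, h1, h2]; ring⟩

lemma IVP.neg {q : ℚ[X]} (hq : IVP q) : IVP (-q) := by
  intro n; obtain ⟨m1, h1⟩ := hq n
  exact ⟨-m1, by push_cast [eval_neg, h1]; ring⟩

lemma IVP.sub {q r : ℚ[X]} (hq : IVP q) (hr : IVP r) : IVP (q - r) := by
  rw [sub_eq_add_neg]; exact hq.add hr.neg

lemma IVP.der {q qs : ℚ[X]} (hq : IVP q) (hqs : IVP qs) (a : ℤ) : IVP (der q qs a) := by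
  intro n
  obtain ⟨m1, h1⟩ := hq (n + a)
  obtain ⟨m2, h2⟩ := hq a
  obtain ⟨m3, h3⟩ := hqs n
  refine ⟨m1 - m2 - m3, ?_⟩
  simp only [CorB.der, eval_sub, eval_comp, eval_add, eval_X, eval_C]
  push_cast at h1 ⊢
  rw [h1, h2, h3]

lemma ev_der {q qs : ℚ[X]} (hq : IVP q) (hqs : IVP qs) (a n : ℤ) :
    ev (der q qs a) n = ev q (n + a) - ev q a - ev qs n := by
  have h := ev_spec (hq.der hqs a) n
  have h1 := ev_spec hq (n + a)
  have h2 := ev_spec hq a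
  have h3 := ev_spec hqs n
  have : ((ev (der q qs a) n : ℤ) : ℚ) = ((ev q (n+a) - ev q a - ev qs n : ℤ) : ℚ) := by
    rw [h]
    simp only [CorB.der, eval_sub, eval_comp, eval_add, eval_X, eval_C]
    push_cast
    rw [h1, h2, h3]
    push_cast
    ring
  exact_mod_cast this

lemma ev_zero_of {q : ℚ[X]} (h0 : q.eval 0 = 0) : ev q 0 = 0 := by
  rw [ev]
  norm_num [h0]

lemma der_eval_zero {q qs : ℚ[X]} (hqs0 : qs.eval 0 = 0) (a : ℤ) :
    (der q qs a).eval 0 = 0 := by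
  simp [der, hqs0]

/-- nonzero integral polynomial vanishing at 0 has natDegree ≥ 1 -/
lemma one_le_natDegree_of {q : ℚ[X]} (h0 : q.eval 0 = 0) (hne : q ≠ 0) :
    1 ≤ q.natDegree := by
  by_contra h
  push_neg at h
  interval_cases hq : q.natDegree
  · have := Polynomial.natDegree_eq_zero.mp hq
    obtain ⟨c, rfl⟩ := this
    simp at h0
    simp [h0] at hne

/-! degree and leading coefficient of the derived polynomial -/

lemma comp_natDegree (q : ℚ[X]) (a : ℚ) : (q.comp (X + C a)).natDegree = q.natDegree := by
  rw [Polynomial.natDegree_comp]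
  simp [Polynomial.natDegree_X_add_C]

lemma comp_leadingCoeff (q : ℚ[X]) (a : ℚ) (hq : 1 ≤ q.natDegree) :
    (q.comp (X + C a)).leadingCoeff = q.leadingCoeff := by
  rw [Polynomial.leadingCoeff_comp (by simp [Polynomial.natDegree_X_add_C])]
  simp [Polynomial.leadingCoeff_X_add_C]

lemma der_coeff_top {q qs : ℚ[X]} (a : ℤ) (k : ℕ) (hk : 1 ≤ k)
    (hq : q.natDegree ≤ k) (hqs : qs.natDegree ≤ k) :
    (der q qs a).coeff k = q.coeff k - qs.coeff k := by
  have h1 : (q.comp (X + C (a:ℚ))).coeff k = q.coeff k := by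
    rcases eq_or_lt_of_le hq with h | h
    · rcases eq_or_ne q 0 with rfl | hq0
      · simp
      have hd1 : 1 ≤ q.natDegree := by omega
      calc (q.comp (X + C (a:ℚ))).coeff k
          = (q.comp (X + C (a:ℚ))).coeff ((q.comp (X + C (a:ℚ))).natDegree) := by
            rw [comp_natDegree, h]
        _ = (q.comp (X + C (a:ℚ))).leadingCoeff := rfl
        _ = q.leadingCoeff := comp_leadingCoeff q a hd1
        _ = q.coeff q.natDegree := rfl
        _ = q.coeff k := by rw [h]
    · rw [Polynomial.coeff_eq_zero_of_natDegree_lt (by rw [comp_natDegree]; omega),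
        Polynomial.coeff_eq_zero_of_natDegree_lt h]
  have h2 : (C (q.eval (a:ℚ))).coeff k = 0 := by
    rw [Polynomial.coeff_C]
    simp
    omega
  rw [der, Polynomial.coeff_sub, Polynomial.coeff_sub, h1, h2]
  ring


/-! ### degree/leading coefficient structure of der -/

lemma der_natDegree_le {q qs : ℚ[X]} (a : ℤ) (k : ℕ)
    (hq : q.natDegree ≤ k) (hqs : qs.natDegree ≤ k) : (der q qs a).natDegree ≤ k := by
  unfold der
  refine le_trans (Polynomial.natDegree_sub_le _ _) ?_
  simp only [max_le_iff]
  refine ⟨le_trans (Polynomial.natDegree_sub_le _ _) ?_, hqs⟩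
  simp only [max_le_iff]
  exact ⟨by rw [comp_natDegree]; exact hq, by simp⟩

lemma der_gt {q qs : ℚ[X]} (a : ℤ) (h : qs.natDegree < q.natDegree) (hq1 : 1 ≤ q.natDegree) :
    (der q qs a).natDegree = q.natDegree ∧ (der q qs a).leadingCoeff = q.leadingCoeff := by
  have hqne : q ≠ 0 := by
    intro h0; rw [h0] at hq1; simp at hq1
  have hco : (der q qs a).coeff q.natDegree = q.leadingCoeff := by
    rw [der_coeff_top a q.natDegree hq1 (le_refl _) (le_of_lt h),
      Polynomial.coeff_eq_zero_of_natDegree_lt h, sub_zero]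
    rfl
  have hne : (der q qs a).coeff q.natDegree ≠ 0 := by
    rw [hco]; exact Polynomial.leadingCoeff_ne_zero.mpr hqne
  have hdeg : (der q qs a).natDegree = q.natDegree :=
    le_antisymm (der_natDegree_le a _ (le_refl _) (le_of_lt h))
      (Polynomial.le_natDegree_of_ne_zero hne)
  exact ⟨hdeg, by rw [Polynomial.leadingCoeff, hdeg, hco]⟩

lemma der_eq_ne {q qs : ℚ[X]} (a : ℤ) (h : q.natDegree = qs.natDegree)
    (hq1 : 1 ≤ qs.natDegree) (hlc : q.leadingCoeff ≠ qs.leadingCoeff) :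
    (der q qs a).natDegree = qs.natDegree ∧
      (der q qs a).leadingCoeff = q.leadingCoeff - qs.leadingCoeff := by
  have hco : (der q qs a).coeff qs.natDegree = q.leadingCoeff - qs.leadingCoeff := by
    rw [der_coeff_top a qs.natDegree hq1 (le_of_eq h) (le_refl _)]
    unfold Polynomial.leadingCoeff
    rw [h]
  have hne : (der q qs a).coeff qs.natDegree ≠ 0 := by
    rw [hco]; exact sub_ne_zero_of_ne hlc
  have hdeg : (der q qs a).natDegree = qs.natDegree :=
    le_antisymm (der_natDegree_le a _ (le_of_eq h) (le_refl _))
      (Polynomial.le_natDegree_of_ne_zero hne)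
  exact ⟨hdeg, by rw [Polynomial.leadingCoeff, hdeg, hco]⟩

lemma der_eq_eq {q qs : ℚ[X]} (a : ℤ) (h : q.natDegree = qs.natDegree)
    (hq1 : 1 ≤ qs.natDegree) (hlc : q.leadingCoeff = qs.leadingCoeff)
    (hne : der q qs a ≠ 0) : (der q qs a).natDegree < qs.natDegree := by
  have hco : (der q qs a).coeff qs.natDegree = 0 := by
    rw [der_coeff_top a qs.natDegree hq1 (le_of_eq h) (le_refl _), sub_eq_zero]
    unfold Polynomial.leadingCoeff at hlc
    rw [← h] at hlc ⊢
    exact hlc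
  have hle : (der q qs a).natDegree ≤ qs.natDegree :=
    der_natDegree_le a _ (le_of_eq h) (le_refl _)
  rcases lt_or_eq_of_le hle with h1 | h1
  · exact h1
  · exfalso
    apply hne
    rw [← Polynomial.leadingCoeff_eq_zero, Polynomial.leadingCoeff, h1, hco]

/-! ### ordinal measure -/

open scoped Classical

noncomputable def mu (f : ℕ → ℕ) : ℕ → Ordinal.{0}
  | 0 => 0
  | (k+1) => Ordinal.omega0 ^ ((k:Ordinal) + 1) * (f (k+1) : Ordinal) + mu f k

lemma mu_lt (f : ℕ → ℕ) (k : ℕ) : mu f k < Ordinal.omega0 ^ ((k : Ordinal) + 1) := by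
  induction k with
  | zero =>
    rw [mu]
    have : (0:Ordinal) < Ordinal.omega0 := Ordinal.omega0_pos
    calc (0:Ordinal) < Ordinal.omega0 := this
    _ ≤ Ordinal.omega0 ^ ((0:ℕ) + 1 : Ordinal) := by
        norm_num
  | succ n ih =>
    rw [mu]
    have hprin := Ordinal.principal_add_omega0_opow ((n:Ordinal) + 1 + 1)
    have h1 : Ordinal.omega0 ^ ((n:Ordinal) + 1) * (f (n+1) : Ordinal) <
        Ordinal.omega0 ^ ((n:Ordinal) + 1 + 1) := by
      have hos : Ordinal.omega0 ^ ((n:Ordinal) + 1 + 1)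
          = Ordinal.omega0 ^ ((n:Ordinal) + 1) * Ordinal.omega0 := by
        rw [Ordinal.opow_add, Ordinal.opow_one]
      rw [hos]
      apply mul_lt_mul_of_pos_left (Ordinal.nat_lt_omega0 _)
      exact Ordinal.opow_pos _ Ordinal.omega0_pos
    have h2 : mu f n < Ordinal.omega0 ^ ((n:Ordinal) + 1 + 1) :=
      lt_of_lt_of_le ih (Ordinal.opow_le_opow_right Ordinal.omega0_pos (by
        exact le_of_lt (lt_add_one _)))
    have h3 := hprin h1 h2
    have hcast : (((n:ℕ)+1 : ℕ) : Ordinal) + 1 = (n:Ordinal) + 1 + 1 := by push_cast; ring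
    rw [hcast]
    exact h3

lemma mu_mono_lt (f g : ℕ → ℕ) (k0 : ℕ) (hk0 : 1 ≤ k0) (hlt : f k0 < g k0)
    (hle : ∀ l, k0 < l → f l ≤ g l) : ∀ B, k0 ≤ B → mu f B < mu g B := by
  intro B
  induction B with
  | zero => intro h; omega
  | succ n ih =>
    intro hB
    rcases Nat.eq_or_lt_of_le hB with h | h
    · -- k0 = n+1 : top coefficient drops
      rw [mu, mu, ← h]
      calc Ordinal.omega0 ^ ((n:Ordinal) + 1) * (f k0 : Ordinal) + mu f n
          < Ordinal.omega0 ^ ((n:Ordinal) + 1) * (f k0 : Ordinal) +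
            Ordinal.omega0 ^ ((n:Ordinal) + 1) := by
            exact add_lt_add_right (mu_lt f n) _
        _ = Ordinal.omega0 ^ ((n:Ordinal) + 1) * ((f k0 : Ordinal) + 1) := by
            rw [mul_add, mul_one]
        _ ≤ Ordinal.omega0 ^ ((n:Ordinal) + 1) * (g k0 : Ordinal) := by
            apply mul_le_mul_right
            have : ((f k0 : Ordinal) + 1) = ((f k0 + 1 : ℕ) : Ordinal) := by push_cast; ring
            rw [this]
            exact_mod_cast Nat.cast_le.mpr hlt
        _ ≤ Ordinal.omega0 ^ ((n:Ordinal) + 1) * (g k0 : Ordinal) + mu g n :=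
            le_add_of_nonneg_right zero_le
    · -- k0 ≤ n
      rw [mu, mu]
      have hf : f (n+1) ≤ g (n+1) := hle _ (by omega)
      calc Ordinal.omega0 ^ ((n:Ordinal) + 1) * (f (n+1) : Ordinal) + mu f n
          < Ordinal.omega0 ^ ((n:Ordinal) + 1) * (f (n+1) : Ordinal) + mu g n :=
            add_lt_add_right (ih (by omega)) _
        _ ≤ Ordinal.omega0 ^ ((n:Ordinal) + 1) * (g (n+1) : Ordinal) + mu g n := by
            apply add_le_add_left
            exact mul_le_mul_right (by exact_mod_cast hf) _

lemma mu_ext (f : ℕ → ℕ) {B B' : ℕ} (h : B ≤ B') (hz : ∀ l, B < l → f l = 0) :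
    mu f B' = mu f B := by
  induction B' with
  | zero => have : B = 0 := by omega
            rw [this]
  | succ n ih =>
    rcases Nat.eq_or_lt_of_le h with h1 | h1
    · rw [h1]
    · rw [mu, hz (n+1) (by omega)]
      simp only [Nat.cast_zero, mul_zero, zero_add]
      exact ih (by omega)

/-! ### class counts and family measure -/

noncomputable def cnt (Q : Finset ℚ[X]) (k : ℕ) : ℕ :=
  ((Q.filter (fun q => q.natDegree = k ∧ q ≠ 0)).image Polynomial.leadingCoeff).card

noncomputable def maxdeg (Q : Finset ℚ[X]) : ℕ := Q.sup Polynomial.natDegree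

noncomputable def muQ (Q : Finset ℚ[X]) : Ordinal.{0} := mu (cnt Q) (maxdeg Q)

lemma cnt_eq_zero {Q : Finset ℚ[X]} {k : ℕ} (h : maxdeg Q < k) : cnt Q k = 0 := by
  rw [cnt, Finset.card_eq_zero, Finset.image_eq_empty, Finset.filter_eq_empty_iff]
  rintro q hq ⟨h1, h2⟩
  have h3 := Finset.le_sup (f := Polynomial.natDegree) hq
  rw [h1] at h3
  rw [maxdeg] at h
  omega

lemma muQ_eq (Q : Finset ℚ[X]) (B : ℕ) (hB : maxdeg Q ≤ B) : muQ Q = mu (cnt Q) B := by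
  rw [muQ, mu_ext (cnt Q) hB (fun l hl => cnt_eq_zero hl)]

/-! ### the PET weight drop -/

theorem weight_drop (Q : Finset ℚ[X]) (hQ0 : (0:ℚ[X]) ∉ Q)
    (hQz : ∀ q ∈ Q, q.eval 0 = 0)
    (qs : ℚ[X]) (hqs : qs ∈ Q) (hmin : ∀ q ∈ Q, qs.natDegree ≤ q.natDegree)
    (hqs1 : 1 ≤ qs.natDegree)
    (Anc : Finset ℤ) :
    muQ (((Q ×ˢ Anc).image (fun qa => der qa.1 qs qa.2)).erase 0) < muQ Q := by
  set D := ((Q ×ˢ Anc).image (fun qa => der qa.1 qs qa.2)).erase 0 with hD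
  set ks := qs.natDegree with hks
  -- elements of D are nonzero `der q qs a` with q ∈ Q
  have hDmem : ∀ d ∈ D, d ≠ 0 ∧ ∃ q ∈ Q, ∃ a ∈ Anc, d = der q qs a := by
    intro d hd
    rw [hD, Finset.mem_erase, Finset.mem_image] at hd
    obtain ⟨hne, ⟨qa, hqa, hdq⟩⟩ := hd
    rw [Finset.mem_product] at hqa
    exact ⟨hne, qa.1, hqa.1, qa.2, hqa.2, hdq.symm⟩
  have hq1 : ∀ q ∈ Q, 1 ≤ q.natDegree := fun q hq => le_trans hqs1 (hmin q hq)
  -- (b) for l > ks the leading-coefficient classes of D inject into those of Q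
  have hb : ∀ l, ks < l → cnt D l ≤ cnt Q l := by
    intro l hl
    rw [cnt, cnt]
    apply Finset.card_le_card
    intro c hc
    rw [Finset.mem_image] at hc ⊢
    obtain ⟨d, hd, hdc⟩ := hc
    rw [Finset.mem_filter] at hd
    obtain ⟨hd1, hd2, hd3⟩ := hd
    obtain ⟨hne, q, hqQ, a, ha, rfl⟩ := hDmem d hd1
    -- compare degrees
    rcases lt_or_eq_of_le (hmin q hqQ) with hcmp | hcmp
    · obtain ⟨he1, he2⟩ := der_gt a hcmp (hq1 q hqQ)
      refine ⟨q, ?_, by rw [← hdc, he2]⟩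
      rw [Finset.mem_filter]
      refine ⟨hqQ, by rw [← he1, hd2], ?_⟩
      intro h0; rw [h0] at hqQ; exact hQ0 hqQ
    · exfalso
      -- natDegree q = ks, so der has degree ≤ ks < l
      have hle : (der q qs a).natDegree ≤ ks :=
        der_natDegree_le a ks (le_of_eq hcmp.symm) (le_refl _)
      omega
  -- (a) at level ks the count strictly drops
  have hqsne : qs ≠ 0 := by intro h0; rw [h0] at hqs; exact hQ0 hqs
  have ha : cnt D ks < cnt Q ks := by
    have hsub : ((D.filter (fun q => q.natDegree = ks ∧ q ≠ 0)).image Polynomial.leadingCoeff)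
        ⊆ (((Q.filter (fun q => q.natDegree = ks ∧ q ≠ 0)).image
            Polynomial.leadingCoeff).erase qs.leadingCoeff).image
            (fun c => c - qs.leadingCoeff) := by
      intro c hc
      rw [Finset.mem_image] at hc
      obtain ⟨d, hd, hdc⟩ := hc
      rw [Finset.mem_filter] at hd
      obtain ⟨hd1, hd2, hd3⟩ := hd
      obtain ⟨hne, q, hqQ, a, haA, rfl⟩ := hDmem d hd1
      rcases lt_or_eq_of_le (hmin q hqQ) with hcmp | hcmp
      · obtain ⟨he1, he2⟩ := der_gt a hcmp (hq1 q hqQ)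
        omega
      · -- natDegree q = ks
        by_cases hlc : q.leadingCoeff = qs.leadingCoeff
        · have := der_eq_eq a hcmp.symm hqs1 hlc hne
          omega
        · obtain ⟨he1, he2⟩ := der_eq_ne a hcmp.symm hqs1 hlc
          rw [Finset.mem_image]
          refine ⟨q.leadingCoeff, ?_, by rw [← hdc, he2]⟩
          rw [Finset.mem_erase, Finset.mem_image]
          refine ⟨hlc, q, ?_, rfl⟩
          rw [Finset.mem_filter]
          refine ⟨hqQ, hcmp.symm, fun h0 => hQ0 (h0 ▸ hqQ)⟩
    have hqsmem : qs.leadingCoeff ∈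
        ((Q.filter (fun q => q.natDegree = ks ∧ q ≠ 0)).image Polynomial.leadingCoeff) := by
      rw [Finset.mem_image]
      exact ⟨qs, by rw [Finset.mem_filter]; exact ⟨hqs, rfl, hqsne⟩, rfl⟩
    calc cnt D ks ≤ _ := Finset.card_le_card hsub
      _ ≤ (((Q.filter (fun q => q.natDegree = ks ∧ q ≠ 0)).image
            Polynomial.leadingCoeff).erase qs.leadingCoeff).card := Finset.card_image_le
      _ < ((Q.filter (fun q => q.natDegree = ks ∧ q ≠ 0)).image Polynomial.leadingCoeff).card :=
          Finset.card_erase_lt_of_mem hqsmem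
      _ = cnt Q ks := rfl
  -- combine
  set B := max (maxdeg D) (maxdeg Q) with hB
  rw [muQ_eq D B (le_max_left _ _), muQ_eq Q B (le_max_right _ _)]
  apply mu_mono_lt (cnt D) (cnt Q) ks hqs1 ha hb
  calc ks ≤ maxdeg Q := Finset.le_sup (f := Polynomial.natDegree) hqs
    _ ≤ B := le_max_right _ _


lemma ev_zero_poly (n : ℤ) : ev (0:ℚ[X]) n = 0 := by simp [ev]

def Nsum (Fs : ℕ → Finset ℕ) (y : ℕ → ℤ) (j k : ℕ) : ℤ :=
  ∑ u ∈ Finset.Ico j k, ∑ i ∈ Fs u, y i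

lemma Nsum_self (Fs : ℕ → Finset ℕ) (y : ℕ → ℤ) (j : ℕ) : Nsum Fs y j j = 0 := by
  simp [Nsum]

lemma Nsum_succ (Fs : ℕ → Finset ℕ) (y : ℕ → ℤ) (j k : ℕ) (h : j ≤ k) :
    Nsum Fs y j (k+1) = Nsum Fs y j k + ∑ i ∈ Fs k, y i := by
  rw [Nsum, Nsum, Finset.sum_Ico_succ_top h]

lemma Nsum_congr {Fs Fs' : ℕ → Finset ℕ} (y : ℕ → ℤ) (j k : ℕ)
    (h : ∀ u, j ≤ u → u < k → Fs u = Fs' u) : Nsum Fs y j k = Nsum Fs' y j k := by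
  apply Finset.sum_congr rfl
  intro u hu
  rw [Finset.mem_Ico] at hu
  rw [h u hu.1 hu.2]

theorem chain_lemma (ψ : ℤ → A)
    (hUR : ∀ (c : ℤ) (W : ℕ), ∃ K : ℕ, ∀ t : ℤ, ∃ s : ℤ, |s - t| ≤ (K:ℤ) ∧
      ∀ v : ℤ, |v| ≤ (W:ℤ) → ψ (s + v) = ψ (c + v))
    (Q : Finset ℚ[X]) (hQ0 : (0:ℚ[X]) ∉ Q) (hQ : ∀ q ∈ Q, IVP q ∧ q.eval 0 = 0)
    (qs : ℚ[X]) (hqs : qs ∈ Q) (hmin : ∀ q ∈ Q, qs.natDegree ≤ q.natDegree)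
    (hqs1 : 1 ≤ qs.natDegree)
    (W : ℕ) (y : ℕ → ℤ) (a₀ : ℕ)
    (ORC : ∀ D : Finset ℚ[X], muQ D < muQ Q → (0:ℚ[X]) ∉ D →
      (∀ g ∈ D, IVP g ∧ g.eval 0 = 0) →
      ∀ (W' a' : ℕ), ∃ (F : Finset ℕ) (z : ℤ → A), F.Nonempty ∧ (∀ i ∈ F, a' ≤ i) ∧
        PatIn z ψ ∧
        ∀ g ∈ D, ∀ v : ℤ, |v| ≤ (W':ℤ) → z (ev g (∑ i ∈ F, y i) + v) = z v) :
    ∀ t : ℕ, ∃ (xs : ℕ → ℤ → A) (Fs : ℕ → Finset ℕ) (bnd : ℕ → ℕ),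
      bnd 0 = a₀ ∧
      (∀ j, j ≤ t → PatIn (xs j) ψ) ∧
      (∀ j, j < t → (Fs j).Nonempty) ∧
      (∀ j, j < t → ∀ i ∈ Fs j, bnd j ≤ i ∧ i < bnd (j+1)) ∧
      (∀ j, j < t → bnd j ≤ bnd (j+1)) ∧
      (∀ j k, j < k → k ≤ t → ∀ q ∈ Q, ∀ v : ℤ, |v| ≤ (W:ℤ) →
        xs k (ev q (Nsum Fs y j k) + v) = xs j v) := by
  intro t
  induction t with
  | zero =>
    exact ⟨fun _ => ψ, fun _ => ∅, fun _ => a₀, rfl,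
      fun j _ => patIn_refl ψ, fun j h => absurd h (by omega),
      fun j h => absurd h (by omega), fun j h => absurd h (by omega),
      fun j k h1 h2 => absurd (lt_of_lt_of_le h1 h2) (by omega)⟩
  | succ t IHt =>
    obtain ⟨xs, Fs, bnd, hbnd0, hx, hFne, hFbd, hbmono, hinv⟩ := IHt
    -- bound on the relevant evaluations
    set M : ℕ := ((Finset.range (t+1)) ×ˢ Q).sup
        (fun ju => (ev ju.2 (Nsum Fs y ju.1 t)).natAbs) with hM
    have hMb : ∀ j, j ≤ t → ∀ q ∈ Q, |ev q (Nsum Fs y j t)| ≤ (M:ℤ) := by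
      intro j hj q hq
      have hmem : (j, q) ∈ (Finset.range (t+1)) ×ˢ Q := by
        rw [Finset.mem_product, Finset.mem_range]
        exact ⟨by omega, hq⟩
      have := Finset.le_sup (f := fun ju => (ev ju.2 (Nsum Fs y ju.1 t)).natAbs) hmem
      rw [Int.abs_eq_natAbs]
      exact_mod_cast this
    -- hitting constant for target (xs t)
    obtain ⟨K, hK⟩ := hitting hUR (xs t) (hx t (le_refl t)) (W + M)
    -- derived family
    set Anc : Finset ℤ := (Finset.range (t+1)).image (fun j => Nsum Fs y j t) with hAnc
    set D : Finset ℚ[X] := ((Q ×ˢ Anc).image (fun qa => der qa.1 qs qa.2)).erase 0 with hD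
    have hD0 : (0:ℚ[X]) ∉ D := Finset.notMem_erase _ _
    have hDz : ∀ g ∈ D, IVP g ∧ g.eval 0 = 0 := by
      intro g hg
      rw [hD, Finset.mem_erase, Finset.mem_image] at hg
      obtain ⟨-, qa, hqa, rfl⟩ := hg
      rw [Finset.mem_product] at hqa
      exact ⟨IVP.der (hQ qa.1 hqa.1).1 (hQ qs hqs).1 qa.2,
        der_eval_zero (hQ qs hqs).2 qa.2⟩
    have hwt : muQ D < muQ Q :=
      weight_drop Q hQ0 (fun q hq => (hQ q hq).2) qs hqs hmin hqs1 Anc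
    -- apply the oracle (induction hypothesis of the weight induction)
    obtain ⟨F', z', hF'ne, hF'lb, hz'pat, hz'cond⟩ :=
      ORC D hwt hD0 hDz (W + K + M) (bnd t)
    set n' : ℤ := ∑ i ∈ F', y i with hn'
    -- conditions for all q ∈ Q and all anchors
    have hcond : ∀ q ∈ Q, ∀ j, j ≤ t → ∀ v : ℤ, |v| ≤ ((W + K + M : ℕ):ℤ) →
        z' (ev (der q qs (Nsum Fs y j t)) n' + v) = z' v := by
      intro q hq j hj v hv
      by_cases hzero : der q qs (Nsum Fs y j t) = 0
      · rw [hzero, ev_zero_poly, zero_add]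
      · apply hz'cond _ _ _ hv
        rw [hD, Finset.mem_erase, Finset.mem_image]
        refine ⟨hzero, (q, Nsum Fs y j t), ?_, rfl⟩
        rw [Finset.mem_product]
        refine ⟨hq, ?_⟩
        rw [hAnc, Finset.mem_image]
        exact ⟨j, by rw [Finset.mem_range]; omega, rfl⟩
    -- hitting step
    obtain ⟨s, hs, hsag⟩ := hK z' hz'pat
    set xnew : ℤ → A := sh (s - ev qs n') z' with hxnew
    -- new data
    refine ⟨Function.update xs (t+1) xnew,
      Function.update Fs t F',
      Function.update bnd (t+1) (F'.max' hF'ne + 1),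
      ?_, ?_, ?_, ?_, ?_, ?_⟩
    · rw [Function.update_of_ne (by omega : (0:ℕ) ≠ t+1)]
      exact hbnd0
    · intro j hj
      by_cases h : j = t+1
      · subst h
        rw [Function.update_self]
        exact patIn_shift _ hz'pat
      · rw [Function.update_of_ne h]
        exact hx j (by omega)
    · intro j hj
      by_cases h : j = t
      · subst h
        rw [Function.update_self]
        exact hF'ne
      · rw [Function.update_of_ne h]
        exact hFne j (by omega)
    · intro j hj i hi
      by_cases h : j = t
      · subst h
        rw [Function.update_self] at hi
        rw [Function.update_of_ne (by omega : j ≠ j+1), Function.update_self]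
        have h1 : bnd j ≤ i := hF'lb i hi
        have h2 : i ≤ F'.max' hF'ne := Finset.le_max' F' i hi
        omega
      · rw [Function.update_of_ne h] at hi
        rw [Function.update_of_ne (by omega : j ≠ t+1),
          Function.update_of_ne (by omega : j+1 ≠ t+1)]
        exact hFbd j (by omega) i hi
    · intro j hj
      by_cases h : j = t
      · subst h
        rw [Function.update_of_ne (by omega : j ≠ j+1), Function.update_self]
        have h1 : bnd j ≤ F'.max' hF'ne := hF'lb _ (F'.max'_mem hF'ne)
        omega
      · rw [Function.update_of_ne (by omega : j ≠ t+1),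
          Function.update_of_ne (by omega : j+1 ≠ t+1)]
        exact hbmono j (by omega)
    · -- the invariant
      intro j k hjk hk q hq v hv
      have hFs'eq : ∀ j' k', k' ≤ t → Nsum (Function.update Fs t F') y j' k'
          = Nsum Fs y j' k' := by
        intro j' k' hk'
        apply Nsum_congr
        intro u hu1 hu2
        rw [Function.update_of_ne (by omega : u ≠ t)]
      by_cases hkt : k = t + 1
      · subst hkt
        have hjt : j ≤ t := by omega
        rw [Function.update_self, Function.update_of_ne (by omega : j ≠ t+1)]
        have hsum : Nsum (Function.update Fs t F') y j (t+1)
            = Nsum Fs y j t + n' := by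
          rw [Nsum_succ _ _ _ _ hjt, Function.update_self, hFs'eq j t (le_refl t), hn']
        rw [hsum]
        set N : ℤ := Nsum Fs y j t with hN
        have hdec : ev q (N + n') = ev (der q qs N) n' + ev q N + ev qs n' := by
          rw [ev_der (hQ q hq).1 (hQ qs hqs).1 N n', add_comm n' N]
          ring
        have hx1 : xnew (ev q (N + n') + v)
            = z' (ev (der q qs N) n' + (ev q N + v + s)) := by
          show z' ((ev q (N + n') + v) + (s - ev qs n')) = _
          rw [hdec]
          congr 1
          ring
        rw [hx1]
        have hvb : |ev q N + v + s| ≤ ((W + K + M : ℕ):ℤ) := by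
          have h1 := abs_le.mp (hMb j hjt q hq)
          rw [← hN] at h1
          have h2 := abs_le.mp hv
          have h3 := abs_le.mp hs
          rw [abs_le]
          push_cast
          omega
        rw [hcond q hq j hjt _ hvb]
        have hvb2 : |ev q N + v| ≤ ((W + M : ℕ):ℤ) := by
          have h1 := abs_le.mp (hMb j hjt q hq)
          rw [← hN] at h1
          have h2 := abs_le.mp hv
          rw [abs_le]
          push_cast
          omega
        have hx2 : z' (ev q N + v + s) = xs t (ev q N + v) := hsag (ev q N + v) hvb2
        rw [hx2]
        by_cases hjt' : j = t
        · subst hjt'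
          rw [hN, Nsum_self, ev_zero_of (hQ q hq).2, zero_add]
        · exact hinv j t (by omega) (le_refl t) q hq v hv
      · have hkt' : k ≤ t := by omega
        rw [Function.update_of_ne (by omega : k ≠ t+1),
          Function.update_of_ne (by omega : j ≠ t+1), hFs'eq j k hkt']
        exact hinv j k hjk hkt' q hq v hv

/-- The core theorem (PET induction): monochromatic polynomial configurations with
    the parameter `n` an FS-sum of any prescribed sequence, located in the
    pattern-closure of a uniformly recurrent coloring. -/
theorem main0 (ψ : ℤ → A)
    (hUR : ∀ (c : ℤ) (W : ℕ), ∃ K : ℕ, ∀ t : ℤ, ∃ s : ℤ, |s - t| ≤ (K:ℤ) ∧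
      ∀ v : ℤ, |v| ≤ (W:ℤ) → ψ (s + v) = ψ (c + v)) :
    ∀ (o : Ordinal.{0}) (Q : Finset ℚ[X]), muQ Q = o → (0:ℚ[X]) ∉ Q →
      (∀ q ∈ Q, IVP q ∧ q.eval 0 = 0) →
    ∀ (W : ℕ) (y : ℕ → ℤ) (a₀ : ℕ),
    ∃ (F : Finset ℕ) (x : ℤ → A), F.Nonempty ∧ (∀ i ∈ F, a₀ ≤ i) ∧ PatIn x ψ ∧
      ∀ q ∈ Q, ∀ v : ℤ, |v| ≤ (W:ℤ) → x (ev q (∑ i ∈ F, y i) + v) = x v := by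
  intro o
  induction o using Ordinal.induction with
  | _ o IH =>
    intro Q hQo hQ0 hQ W y a₀
    rcases Finset.eq_empty_or_nonempty Q with rfl | hQne
    · refine ⟨{a₀}, ψ, Finset.singleton_nonempty a₀, by simp, patIn_refl ψ, by simp⟩
    · obtain ⟨qs, hqs, hmin⟩ := Finset.exists_min_image Q Polynomial.natDegree hQne
      have hqs1 : 1 ≤ qs.natDegree :=
        one_le_natDegree_of (hQ qs hqs).2 (fun h => hQ0 (h ▸ hqs))
      have ORC : ∀ D : Finset ℚ[X], muQ D < muQ Q → (0:ℚ[X]) ∉ D →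
          (∀ g ∈ D, IVP g ∧ g.eval 0 = 0) →
          ∀ (W' a' : ℕ), ∃ (F : Finset ℕ) (z : ℤ → A), F.Nonempty ∧ (∀ i ∈ F, a' ≤ i) ∧
            PatIn z ψ ∧
            ∀ g ∈ D, ∀ v : ℤ, |v| ≤ (W':ℤ) → z (ev g (∑ i ∈ F, y i) + v) = z v := by
        intro D hD hD0 hDz W' a'
        exact IH (muQ D) (hQo ▸ hD) D rfl hD0 hDz W' y a'
      -- run the chain
      set T : ℕ := Fintype.card (Fin (2*W+1) → A) with hT
      obtain ⟨xs, Fs, bnd, hbnd0, hx, hFne, hFbd, hbmono, hinv⟩ :=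
        chain_lemma ψ hUR Q hQ0 hQ qs hqs hmin hqs1 W y a₀ ORC T
      -- pigeonhole on the central patterns of the xs
      have hbmono' : ∀ k, k ≤ T → ∀ j, j ≤ k → bnd j ≤ bnd k := by
        intro k
        induction k with
        | zero =>
          intro _ j hj
          have : j = 0 := by omega
          rw [this]
        | succ n ihn =>
          intro hk j hj
          rcases Nat.eq_or_lt_of_le hj with h | h
          · rw [h]
          · exact le_trans (ihn (by omega) j (by omega)) (hbmono n (by omega))
      have hcard : Fintype.card (Fin (T+1)) > Fintype.card (Fin (2*W+1) → A) := by
        simp [hT]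
      obtain ⟨j', k', hjk', heq⟩ := Fintype.exists_ne_map_eq_of_card_lt
        (fun j : Fin (T+1) => (fun i : Fin (2*W+1) => xs j ((i:ℤ) - W))) hcard
      -- wlog j < k
      have hmain : ∀ (j k : ℕ), j < k → k ≤ T →
          (∀ i : Fin (2*W+1), xs j ((i:ℤ) - W) = xs k ((i:ℤ) - W)) →
          ∃ (F : Finset ℕ) (x : ℤ → A), F.Nonempty ∧ (∀ i ∈ F, a₀ ≤ i) ∧ PatIn x ψ ∧
            ∀ q ∈ Q, ∀ v : ℤ, |v| ≤ (W:ℤ) → x (ev q (∑ i ∈ F, y i) + v) = x v := by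
        intro j k hjk hk hpat
        have hagW : ∀ v : ℤ, |v| ≤ (W:ℤ) → xs j v = xs k v := by
          intro v hv
          have h2 := abs_le.mp hv
          have hi : ((v + W).toNat) < 2*W+1 := by omega
          have := hpat ⟨(v + W).toNat, hi⟩
          have harg : (((⟨(v + W).toNat, hi⟩ : Fin (2*W+1)) : ℤ)) - W = v := by
            simp only []
            push_cast
            omega
          rwa [harg] at this
        -- the witness set
        have hdisj : Set.PairwiseDisjoint ↑(Finset.Ico j k) Fs := by
          intro u hu u' hu' hne
          rw [Finset.coe_Ico, Set.mem_Ico] at hu hu'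
          -- wlog u < u'
          have key : ∀ a b : ℕ, j ≤ a → a < b → b < k → Disjoint (Fs a) (Fs b) := by
            intro a b ha hab hb
            rw [Finset.disjoint_left]
            intro i hia hib
            have h1 := (hFbd a (by omega) i hia).2
            have h2 := (hFbd b (by omega) i hib).1
            have h3 : bnd (a+1) ≤ bnd b := hbmono' b (by omega) (a+1) (by omega)
            omega
          rcases lt_or_gt_of_ne hne with h | h
          · exact key u u' hu.1 h hu'.2
          · exact (key u' u hu'.1 h hu.2).symm
        have hsum : ∑ i ∈ (Finset.Ico j k).biUnion Fs, y i = Nsum Fs y j k :=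
          Finset.sum_biUnion hdisj
        refine ⟨(Finset.Ico j k).biUnion Fs, xs k, ?_, ?_, hx k hk, ?_⟩
        · obtain ⟨i0, hi0⟩ := hFne j (by omega)
          exact ⟨i0, Finset.mem_biUnion.mpr ⟨j, by rw [Finset.mem_Ico]; omega, hi0⟩⟩
        · intro i hi
          obtain ⟨u, hu, hiu⟩ := Finset.mem_biUnion.mp hi
          rw [Finset.mem_Ico] at hu
          have h1 := (hFbd u (by omega) i hiu).1
          have h2 : bnd 0 ≤ bnd u := hbmono' u (by omega) 0 (by omega)
          omega
        · intro q hq v hv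
          rw [hsum, hinv j k hjk hk q hq v hv]
          exact hagW v hv
      rcases lt_or_gt_of_ne hjk' with h | h
      · exact hmain j' k' (by exact_mod_cast h) (by omega) (fun i => congrFun heq i)
      · exact hmain k' j' (by exact_mod_cast h) (by omega) (fun i => (congrFun heq i).symm)



theorem main (ψ : ℤ → A)
    (hUR : ∀ (c : ℤ) (W : ℕ), ∃ K : ℕ, ∀ t : ℤ, ∃ s : ℤ, |s - t| ≤ (K:ℤ) ∧
      ∀ v : ℤ, |v| ≤ (W:ℤ) → ψ (s + v) = ψ (c + v))
    (Q : Finset ℚ[X]) (hQ : ∀ q ∈ Q, IVP q ∧ q.eval 0 = 0)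
    (W : ℕ) (y : ℕ → ℤ) (a₀ : ℕ) :
    ∃ (F : Finset ℕ) (x : ℤ → A), F.Nonempty ∧ (∀ i ∈ F, a₀ ≤ i) ∧ PatIn x ψ ∧
      ∀ q ∈ Q, ∀ v : ℤ, |v| ≤ (W:ℤ) → x (ev q (∑ i ∈ F, y i) + v) = x v := by
  classical
  obtain ⟨F, x, h1, h2, h3, h4⟩ := main0 ψ hUR (muQ (Q.erase 0)) (Q.erase 0) rfl
    (Finset.notMem_erase _ _) (fun q hq => hQ q (Finset.mem_of_mem_erase hq)) W y a₀
  refine ⟨F, x, h1, h2, h3, fun q hq v hv => ?_⟩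
  by_cases h : q = 0
  · subst h
    rw [ev_zero_poly, zero_add]
  · exact h4 q (Finset.mem_erase.mpr ⟨h, hq⟩) v hv

end CorB

/-- Corollary of Theorem B -/
theorem corB (d : ℕ) (hd : 0 < d) (p : Fin d → ℤ → ℤ)
    (hpoly : ∀ i, IsIntPoly (p i)) (hzero : ∀ i, p i 0 = 0)
    (S : Set ℤ) (hS : PiecewiseSyndeticZ S) :
    PiecewiseSyndeticZ {n : ℤ | ∃ m : ℤ, ∀ i, m + p i n ∈ S} := by
  classical
  set T : Set ℤ := {n : ℤ | ∃ m : ℤ, ∀ i, m + p i n ∈ S} with hT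
  obtain ⟨N₀, hthick⟩ := hS
  set U : Set ℤ := {x : ℤ | ∃ i : ℕ, 1 ≤ i ∧ i ≤ N₀ ∧ x + (i:ℤ) ∈ S} with hU
  have hN₀ : 1 ≤ N₀ := by
    obtain ⟨a, ha⟩ := hthick 0
    obtain ⟨i, hi1, hi2, _⟩ := ha 0 (le_refl 0)
    omega
  letI : Nonempty (Fin N₀) := ⟨⟨0, by omega⟩⟩
  -- interval colorings
  set aL : ℕ → ℤ := fun L => (hthick (2*L)).choose with haLdef
  have haL : ∀ L : ℕ, ∀ k : ℕ, k ≤ 2*L → aL L + (k:ℤ) ∈ U := fun L => (hthick (2*L)).choose_spec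
  have hcex : ∀ (L : ℕ) (v : ℤ), ∃ c : Fin N₀, (|v| ≤ (L:ℤ) →
      aL L + L + v + ((c:ℕ):ℤ) + 1 ∈ S) := by
    intro L v
    by_cases h : |v| ≤ (L:ℤ)
    · have h2 := abs_le.mp h
      have hk : ((L + v).toNat) ≤ 2*L := by omega
      obtain ⟨i, hi1, hi2, hi3⟩ := haL L ((L + v).toNat) hk
      refine ⟨⟨i - 1, by omega⟩, fun _ => ?_⟩
      have harg : aL L + (((L + v).toNat : ℕ):ℤ) + (i:ℤ) = aL L + L + v + ((i:ℤ) - 1) + 1 := by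
        push_cast
        omega
      simp only []
      have : ((i - 1 : ℕ) : ℤ) = (i:ℤ) - 1 := by omega
      rw [this]
      rw [← harg]
      exact hi3
    · exact ⟨⟨0, by omega⟩, fun hc => absurd hc h⟩
  set ccol : ℕ → ℤ → Fin N₀ := fun L v => (hcex L v).choose with hccol
  have hcprop : ∀ (L : ℕ) (v : ℤ), |v| ≤ (L:ℤ) →
      aL L + L + v + (((ccol L v : ℕ)):ℤ) + 1 ∈ S := fun L v h => (hcex L v).choose_spec h
  -- the limit coloring
  set χ : ℤ → Fin N₀ := CorB.ulim (hyperfilter ℕ) ccol with hχ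
  have hreal : ∀ G : Finset ℤ, ∃ b : ℤ, ∀ v ∈ G, b + v + ((χ v : ℕ):ℤ) + 1 ∈ S := by
    intro G
    have hagree := CorB.ulim_agree (hyperfilter ℕ) ccol G
    have htail : {L : ℕ | (G.sup (fun v => v.natAbs)) ≤ L} ∈ hyperfilter ℕ := by
      apply mem_hyperfilter_of_finite_compl
      apply Set.Finite.subset (Set.finite_Iio (G.sup (fun v => v.natAbs)))
      intro j hj
      simp only [Set.mem_compl_iff, Set.mem_setOf_eq, not_le] at hj
      exact hj
    obtain ⟨L, hL1, hL2⟩ := Ultrafilter.nonempty_of_mem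
      ((hyperfilter ℕ).inter_mem hagree htail)
    refine ⟨aL L + L, fun v hv => ?_⟩
    have hvabs : |v| ≤ (L:ℤ) := by
      have h1 : v.natAbs ≤ G.sup (fun v => v.natAbs) := Finset.le_sup (f := fun v : ℤ => v.natAbs) hv
      have h2 : (G.sup (fun v => v.natAbs)) ≤ L := hL2
      rw [Int.abs_eq_natAbs]
      exact_mod_cast le_trans h1 h2
    have := hcprop L v hvabs
    rw [hL1 v hv] at this
    exact this
  -- uniformly recurrent point below χ
  obtain ⟨ψ, hψpat, hψUR⟩ := CorB.exists_UR χ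
  -- polynomials
  set qpoly : Fin d → ℚ[X] := fun i => (hpoly i).choose with hqpoly
  have hq : ∀ (i : Fin d) (n : ℤ), (qpoly i).eval (n:ℚ) = (p i n : ℚ) :=
    fun i => (hpoly i).choose_spec
  set Q : Finset ℚ[X] := Finset.image qpoly Finset.univ with hQdef
  have hQ : ∀ q ∈ Q, CorB.IVP q ∧ q.eval 0 = 0 := by
    intro q hqm
    rw [hQdef, Finset.mem_image] at hqm
    obtain ⟨i, -, rfl⟩ := hqm
    constructor
    · exact fun n => ⟨p i n, hq i n⟩
    · have := hq i 0
      push_cast at this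
      rw [this]
      exact_mod_cast congrArg (fun z : ℤ => (z:ℚ)) (hzero i)
  have hev : ∀ (i : Fin d) (n : ℤ), CorB.ev (qpoly i) n = p i n := by
    intro i n
    rw [CorB.ev, hq i n, Rat.num_intCast]
  -- transfer: monochromatic configurations in ψ yield elements of T
  have key : ∀ n : ℤ, (∃ x : ℤ → Fin N₀, CorB.PatIn x ψ ∧
      ∀ q ∈ Q, x (CorB.ev q n) = x 0) → n ∈ T := by
    rintro n ⟨x, hxpat, hcond⟩
    set W₁ : ℕ := Q.sup (fun q => (CorB.ev q n).natAbs) with hW₁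
    obtain ⟨t₁, ht₁⟩ := hxpat W₁
    obtain ⟨t₂, ht₂⟩ := hψpat (W₁ + t₁.natAbs)
    have hcomb : ∀ v : ℤ, |v| ≤ (W₁:ℤ) → x v = χ (t₂ + (t₁ + v)) := by
      intro v hv
      rw [ht₁ v hv]
      apply ht₂
      have h1 := abs_le.mp hv
      have h2 : |t₁ + v| ≤ |t₁| + |v| := abs_add_le _ _
      rw [Int.abs_eq_natAbs t₁] at h2
      rw [abs_le] at h2 ⊢
      push_cast at h2 ⊢
      omega
    obtain ⟨b, hb⟩ := hreal ((Finset.image (fun q => t₂ + t₁ + CorB.ev q n) Q)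
      ∪ {t₂ + t₁})
    set c0 : Fin N₀ := x 0 with hc0
    refine ⟨b + t₂ + t₁ + ((c0:ℕ):ℤ) + 1, fun i => ?_⟩
    have hqm : qpoly i ∈ Q := by
      rw [hQdef, Finset.mem_image]
      exact ⟨i, Finset.mem_univ i, rfl⟩
    have habs : |CorB.ev (qpoly i) n| ≤ (W₁:ℤ) := by
      have := Finset.le_sup (f := fun q => (CorB.ev q n).natAbs) hqm
      rw [Int.abs_eq_natAbs]
      exact_mod_cast this
    have hχv : χ (t₂ + t₁ + CorB.ev (qpoly i) n) = c0 := by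
      have h1 := hcomb (CorB.ev (qpoly i) n) habs
      rw [hcond (qpoly i) hqm] at h1
      have hassoc : t₂ + t₁ + CorB.ev (qpoly i) n = t₂ + (t₁ + CorB.ev (qpoly i) n) := by ring
      rw [hassoc, ← h1]
    have hmem : (t₂ + t₁ + CorB.ev (qpoly i) n) ∈
        ((Finset.image (fun q => t₂ + t₁ + CorB.ev q n) Q) ∪ ({t₂ + t₁} : Finset ℤ)) := by
      rw [Finset.mem_union]
      left
      rw [Finset.mem_image]
      exact ⟨qpoly i, hqm, rfl⟩
    have := hb _ hmem
    rw [hχv] at this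
    have harg : b + (t₂ + t₁ + CorB.ev (qpoly i) n) + ((c0:ℕ):ℤ) + 1
        = b + t₂ + t₁ + ((c0:ℕ):ℤ) + 1 + p i n := by
      rw [hev i n]
      ring
    rw [harg] at this
    exact this
  -- every FS-set meets T
  have FSprop : ∀ y : ℕ → ℤ, ∃ F : Finset ℕ, F.Nonempty ∧ (∑ i ∈ F, y i) ∈ T := by
    intro y
    obtain ⟨F, x, hFne, -, hxpat, hcond⟩ := CorB.main ψ hψUR Q hQ 0 y 0
    refine ⟨F, hFne, key _ ⟨x, hxpat, fun q hq => ?_⟩⟩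
    have := hcond q hq 0 (by simp)
    simpa using this
  -- T is syndetic
  have hsynd : ∃ N : ℕ, ∀ x₀ : ℤ, ∃ i : ℕ, 1 ≤ i ∧ i ≤ N ∧ x₀ + (i:ℤ) ∈ T := by
    by_contra hns
    push_neg at hns
    choose gx hgx using hns
    set yb : ℕ → ℤ := fun b => gx (2*b+1) + (b:ℤ) + 1 with hyb
    set B : ℕ → ℕ := fun k => Nat.rec 1 (fun _ Bk => Bk + (yb Bk).natAbs) k with hB
    set y : ℕ → ℤ := fun k => yb (B k) with hy
    have hBsucc : ∀ k, B (k+1) = B k + (y k).natAbs := fun k => rfl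
    have hB0 : B 0 = 1 := rfl
    have hBsum : ∀ k, (B k : ℤ) = 1 + ∑ i ∈ Finset.range k, |y i| := by
      intro k
      induction k with
      | zero => simp [hB0]
      | succ n ih =>
        rw [Finset.sum_range_succ, hBsucc]
        push_cast
        rw [ih, Int.abs_eq_natAbs]
        push_cast
        ring
    have havoid : ∀ F : Finset ℕ, F.Nonempty → (∑ i ∈ F, y i) ∉ T := by
      intro F hFne hmem
      set k := F.max' hFne with hk
      have hsub : F.erase k ⊆ Finset.range k := by
        intro i hi
        rw [Finset.mem_erase] at hi
        rw [Finset.mem_range]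
        have h2 := Finset.le_max' F i hi.2
        have h3 := hi.1
        omega
      have hτ : |∑ i ∈ F.erase k, y i| ≤ ∑ i ∈ Finset.range k, |y i| :=
        le_trans (Finset.abs_sum_le_sum_abs _ _)
          (Finset.sum_le_sum_of_subset_of_nonneg hsub (fun _ _ _ => abs_nonneg _))
      have hsplit : ∑ i ∈ F, y i = y k + ∑ i ∈ F.erase k, y i :=
        (Finset.add_sum_erase F y (F.max'_mem hFne)).symm
      set τ : ℤ := ∑ i ∈ F.erase k, y i with hτdef
      have hτb : |τ| ≤ (B k : ℤ) - 1 := by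
        rw [hBsum k]
        omega
      have hτb' := abs_le.mp hτb
      set ii : ℕ := ((B k : ℤ) + 1 + τ).toNat with hii
      have hii1 : 1 ≤ ii := by omega
      have hii2 : ii ≤ 2*(B k)+1 := by omega
      apply hgx (2*(B k)+1) ii hii1 hii2
      have harg : gx (2*(B k)+1) + (ii:ℤ) = ∑ i ∈ F, y i := by
        rw [hsplit, hy, hyb]
        simp only []
        push_cast
        omega
      rw [harg]
      exact hmem
    obtain ⟨F, hFne, hFT⟩ := FSprop y
    exact havoid F hFne hFT
  obtain ⟨N, hNs⟩ := hsynd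
  refine ⟨N, fun L => ⟨0, fun k hk => ?_⟩⟩
  simpa using hNs (k:ℤ)
end

section
/- Lemma 4.3: Let k ∈ ℕ and let q_1, …, q_k be nonconstant integral polynomials with q_i(0) = 0 for 1 ≤ i ≤ k. Then there exist 1 ≤ d ≤ k and a subfamily A = {p_1, …, p_d} ⊆ {q_1, …, q_k} such that A satisfies condition (♠) and {q_1, …, q_k} ⊆ {p_i^{[m]} : 1 ≤ i ≤ d, m ∈ ℤ}, where p^{[m]} denotes the polynomial n ↦ p(n+m) − p(m). -/
/-- `p : ℤ → ℤ` agrees with a rational polynomial of degree at least `k`. -/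
def PolyDegGe (p : ℤ → ℤ) (k : ℕ) : Prop :=
  ∃ q : Polynomial ℚ, (∀ n : ℤ, q.eval (n : ℚ) = (p n : ℚ)) ∧ k ≤ q.natDegree

/-- Condition (♠) for a family `p = {p 0, …, p (d-1)}` of integral polynomials:
all vanish at 0 and, after reordering by a permutation `e`, for some `s ≤ d`:
the first `s` are linear `n ↦ aᵢ n` with distinct nonzero integers `aᵢ`, the
remaining ones have degree at least 2, and for distinct non-linear members no
two shifts `n ↦ p(n+k) - p(k)` coincide. -/
def Spade (d : ℕ) (p : Fin d → ℤ → ℤ) : Prop :=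
  (∀ i, IsIntPoly (p i)) ∧ (∀ i, p i 0 = 0) ∧
  ∃ s : ℕ, s ≤ d ∧ ∃ e : Equiv.Perm (Fin d), ∃ a : Fin d → ℤ,
    (∀ i : Fin d, (i : ℕ) < s → a i ≠ 0 ∧ ∀ n : ℤ, p (e i) n = a i * n) ∧
    (∀ i j : Fin d, (i : ℕ) < s → (j : ℕ) < s → a i = a j → i = j) ∧
    (∀ i : Fin d, s ≤ (i : ℕ) → PolyDegGe (p (e i)) 2) ∧
    (∀ i j : Fin d, s ≤ (i : ℕ) → s ≤ (j : ℕ) → i ≠ j → ∀ k t : ℤ,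
      (fun n : ℤ => p (e j) (n + k) - p (e j) k) ≠
        (fun n : ℤ => p (e i) (n + t) - p (e i) t))

def ShiftRel (f g : ℤ → ℤ) : Prop := ∃ m : ℤ, g = fun n => f (n + m) - f m

lemma shiftRel_refl {f : ℤ → ℤ} (hf : f 0 = 0) : ShiftRel f f :=
  ⟨0, by funext n; simp [hf]⟩

lemma shiftRel_symm {f g : ℤ → ℤ} (hf : f 0 = 0) (h : ShiftRel f g) : ShiftRel g f := by
  obtain ⟨m, rfl⟩ := h
  refine ⟨-m, ?_⟩
  funext n
  have h1 : n + -m + m = n := by ring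
  have h2 : (-m : ℤ) + m = 0 := by ring
  show f n = f (n + -m + m) - f m - (f (-m + m) - f m)
  rw [h1, h2, hf]; ring

lemma shiftRel_trans {f g h : ℤ → ℤ} (h1 : ShiftRel f g) (h2 : ShiftRel g h) :
    ShiftRel f h := by
  obtain ⟨m, rfl⟩ := h1; obtain ⟨m', rfl⟩ := h2
  refine ⟨m + m', ?_⟩
  funext n
  have e1 : n + m' + m = n + (m + m') := by ring
  have e2 : m' + m = m + m' := by ring
  show f (n + m' + m) - f m - (f (m' + m) - f m) = f (n + (m + m')) - f (m + m')
  rw [e1, e2]; ring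

lemma lin_or_deg2 {f : ℤ → ℤ} (hf : IsIntPoly f) (h0 : f 0 = 0)
    (hnc : ¬ ∃ c : ℤ, ∀ n : ℤ, f n = c) :
    (∃ a : ℤ, a ≠ 0 ∧ ∀ n : ℤ, f n = a * n) ∨ PolyDegGe f 2 := by
  obtain ⟨Q, hQ⟩ := hf
  by_cases hd : 2 ≤ Q.natDegree
  · exact Or.inr ⟨Q, hQ, hd⟩
  · left
    have hd1 : Q.natDegree ≤ 1 := by omega
    have hform := Polynomial.eq_X_add_C_of_natDegree_le_one hd1
    have hc0 : Q.coeff 0 = 0 := by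
      have h := hQ 0
      rw [hform] at h
      simpa [h0] using h
    have key : ∀ n : ℤ, (f n : ℚ) = Q.coeff 1 * n := by
      intro n
      rw [← hQ n, hform]
      simp [hc0]
    have hc1 : (Q.coeff 1 : ℚ) = (f 1 : ℚ) := by simpa using (key 1).symm
    refine ⟨f 1, ?_, ?_⟩
    · intro h
      apply hnc
      refine ⟨0, fun n => ?_⟩
      have hn := key n
      rw [hc1, h] at hn
      exact_mod_cast by simpa using hn
    · intro n
      have hn := key n
      rw [hc1] at hn
      exact_mod_cast hn

/-- Lemma 4.3 -/
theorem lemma43 (k : ℕ) (hk : 0 < k) (q : Fin k → ℤ → ℤ)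
    (hpoly : ∀ j, IsIntPoly (q j)) (hzero : ∀ j, q j 0 = 0)
    (hnc : ∀ j, ¬ ∃ c : ℤ, ∀ n : ℤ, q j n = c) :
    ∃ d : ℕ, 1 ≤ d ∧ d ≤ k ∧ ∃ p : Fin d → ℤ → ℤ,
      (∀ i, ∃ j, p i = q j) ∧ Spade d p ∧
      ∀ j : Fin k, ∃ i : Fin d, ∃ m : ℤ, q j = fun n : ℤ => p i (n + m) - p i m := by
  classical
  have hrefl : ∀ j : Fin k, ShiftRel (q j) (q j) := fun j => shiftRel_refl (hzero j)
  -- equivalence classes and minimal representatives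
  set T : Fin k → Finset (Fin k) :=
    fun j => Finset.univ.filter (fun i => ShiftRel (q i) (q j)) with hT
  have hTmem : ∀ i j : Fin k, i ∈ T j ↔ ShiftRel (q i) (q j) := by
    intro i j; simp [hT]
  have hTne : ∀ j, (T j).Nonempty := fun j => ⟨j, (hTmem j j).mpr (hrefl j)⟩
  set rep : Fin k → Fin k := fun j => (T j).min' (hTne j) with hrep
  have hrepRel : ∀ j, ShiftRel (q (rep j)) (q j) :=
    fun j => (hTmem _ j).mp ((T j).min'_mem (hTne j))
  have hTeq : ∀ j j', ShiftRel (q j) (q j') → T j = T j' := by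
    intro j j' h
    ext i
    rw [hTmem, hTmem]
    exact ⟨fun hi => shiftRel_trans hi h,
      fun hi => shiftRel_trans hi (shiftRel_symm (hzero j) h)⟩
  have hrepuniq : ∀ j j' : Fin k, ShiftRel (q (rep j)) (q (rep j')) → rep j = rep j' := by
    intro j j' h
    have h1 : T (rep j) = T j := hTeq _ _ (hrepRel j)
    have h2 : T (rep j') = T j' := hTeq _ _ (hrepRel j')
    have hm1 : rep j ∈ T j' := by rw [← h2]; exact (hTmem _ _).mpr h
    have hm2 : rep j' ∈ T j := by
      rw [← h1]; exact (hTmem _ _).mpr (shiftRel_symm (hzero (rep j)) h)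
    exact le_antisymm (Finset.min'_le _ _ hm2) (Finset.min'_le _ _ hm1)
  set S : Finset (Fin k) := Finset.image rep Finset.univ with hS
  have hSrel : ∀ i ∈ S, ∀ i' ∈ S, ShiftRel (q i) (q i') → i = i' := by
    intro i hi i' hi' h
    obtain ⟨j, -, rfl⟩ := Finset.mem_image.mp hi
    obtain ⟨j', -, rfl⟩ := Finset.mem_image.mp hi'
    exact hrepuniq j j' h
  set SL : Finset (Fin k) := S.filter (fun i => ∃ a : ℤ, a ≠ 0 ∧ ∀ n : ℤ, q i n = a * n)
    with hSL
  set SN : Finset (Fin k) := S.filter (fun i => ¬ ∃ a : ℤ, a ≠ 0 ∧ ∀ n : ℤ, q i n = a * n)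
    with hSN
  set lL : List (Fin k) := SL.toList with hlL
  set lN : List (Fin k) := SN.toList with hlN
  set l : List (Fin k) := lL ++ lN with hl
  set d : ℕ := S.card with hd
  have hlen : l.length = d := by
    rw [hl, List.length_append, hlL, hlN, Finset.length_toList, Finset.length_toList,
      hd, hSL, hSN]
    exact Finset.card_filter_add_card_filter_not _
  have hnodup : l.Nodup := by
    refine List.Nodup.append (Finset.nodup_toList _) (Finset.nodup_toList _) ?_
    intro x hx hx'
    have h1 := (Finset.mem_filter.mp (Finset.mem_toList.mp hx)).2
    have h2 := (Finset.mem_filter.mp (Finset.mem_toList.mp hx')).2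
    exact h2 h1
  set g : Fin d → Fin k := fun i => l.get (Fin.cast hlen.symm i) with hg
  have hginj : Function.Injective g := by
    intro i j hij
    have := (List.nodup_iff_injective_get.mp hnodup) hij
    exact Fin.cast_injective _ (by exact this)
  have hgS : ∀ i : Fin d, g i ∈ S := by
    intro i
    have hmem : g i ∈ l := List.get_mem l _
    rcases List.mem_append.mp hmem with h | h
    · exact (Finset.mem_filter.mp (Finset.mem_toList.mp h)).1
    · exact (Finset.mem_filter.mp (Finset.mem_toList.mp h)).1
  set s : ℕ := SL.card with hs
  have hsL : lL.length = s := by rw [hlL, Finset.length_toList]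
  have hgL : ∀ i : Fin d, (i : ℕ) < s → g i ∈ SL := by
    intro i hi
    have hi' : (i : ℕ) < lL.length := by omega
    have hgi : g i = lL[(i : ℕ)]'hi' := List.getElem_append_left hi'
    rw [hgi]
    exact Finset.mem_toList.mp (List.getElem_mem _)
  have hgN : ∀ i : Fin d, s ≤ (i : ℕ) → g i ∈ SN := by
    intro i hi
    have hi2 : (i : ℕ) < l.length := by rw [hlen]; exact i.isLt
    have hi' : (i : ℕ) - lL.length < lN.length := by
      rw [hl, List.length_append] at hi2; omega
    have hge : lL.length ≤ (i : ℕ) := by omega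
    have hgi : g i = lN[(i : ℕ) - lL.length]'hi' := List.getElem_append_right hge
    rw [hgi]
    exact Finset.mem_toList.mp (List.getElem_mem _)
  refine ⟨d, ?_, ?_, fun i => q (g i), fun i => ⟨g i, rfl⟩, ?_, ?_⟩
  · -- 1 ≤ d
    rw [hd]
    refine Finset.card_pos.mpr ⟨rep ⟨0, hk⟩, ?_⟩
    exact Finset.mem_image.mpr ⟨⟨0, hk⟩, Finset.mem_univ _, rfl⟩
  · -- d ≤ k
    calc d ≤ Finset.univ.card := Finset.card_le_univ S
    _ = k := by simp
  · -- Spade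
    refine ⟨fun i => hpoly (g i), fun i => hzero (g i), s, ?_, Equiv.refl _,
      fun i => q (g i) 1, ?_, ?_, ?_, ?_⟩
    · rw [hs, hd, hSL]; exact Finset.card_filter_le _ _
    · intro i hi
      obtain ⟨a0, ha0, hlin⟩ := (Finset.mem_filter.mp (hgL i hi)).2
      have ha : q (g i) 1 = a0 := by rw [hlin 1]; ring
      constructor
      · show q (g i) 1 ≠ 0
        rw [ha]; exact ha0
      · intro n
        show q (g i) n = q (g i) 1 * n
        rw [ha, hlin n]
    · intro i j hi hj hij
      obtain ⟨ai, hai, hlini⟩ := (Finset.mem_filter.mp (hgL i hi)).2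
      obtain ⟨aj, haj, hlinj⟩ := (Finset.mem_filter.mp (hgL j hj)).2
      have hai1 : q (g i) 1 = ai := by rw [hlini 1]; ring
      have haj1 : q (g j) 1 = aj := by rw [hlinj 1]; ring
      have haa : ai = aj := by rw [← hai1, ← haj1]; exact hij
      have hqq : q (g i) = q (g j) := by
        funext n; rw [hlini n, hlinj n, haa]
      have : g i = g j := hSrel _ (hgS i) _ (hgS j) (hqq ▸ hrefl (g i))
      exact hginj this
    · intro i hi
      have hnl := (Finset.mem_filter.mp (hgN i hi)).2
      rcases lin_or_deg2 (hpoly (g i)) (hzero (g i)) (hnc (g i)) with h | h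
      · exact absurd h hnl
      · exact h
    · intro i j hi hj hij k' t heq
      have h1 : ShiftRel (q (g j)) (fun n => q (g j) (n + k') - q (g j) k') := ⟨k', rfl⟩
      have h2 : ShiftRel (q (g i)) (fun n => q (g i) (n + t) - q (g i) t) := ⟨t, rfl⟩
      have heq' : (fun n : ℤ => q (g j) (n + k') - q (g j) k')
          = (fun n : ℤ => q (g i) (n + t) - q (g i) t) := heq
      rw [heq'] at h1
      have h3 : ShiftRel (q (g i)) (q (g j)) :=
        shiftRel_trans h2 (shiftRel_symm (hzero (g j)) h1)
      exact hij (hginj (hSrel _ (hgS i) _ (hgS j) h3))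
  · -- covering
    intro j
    have hrS : rep j ∈ S := Finset.mem_image.mpr ⟨j, Finset.mem_univ _, rfl⟩
    have hrl : rep j ∈ l := by
      rw [hl, List.mem_append]
      by_cases hlin : ∃ a : ℤ, a ≠ 0 ∧ ∀ n : ℤ, q (rep j) n = a * n
      · exact Or.inl (Finset.mem_toList.mpr (Finset.mem_filter.mpr ⟨hrS, hlin⟩))
      · exact Or.inr (Finset.mem_toList.mpr (Finset.mem_filter.mpr ⟨hrS, hlin⟩))
    obtain ⟨n, hn⟩ := List.mem_iff_get.mp hrl
    refine ⟨Fin.cast hlen n, ?_⟩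
    have hgn : g (Fin.cast hlen n) = rep j := hn
    obtain ⟨m, hm⟩ := hrepRel j
    refine ⟨m, ?_⟩
    show q j = fun n1 => q (g (Fin.cast hlen n)) (n1 + m) - q (g (Fin.cast hlen n)) m
    rw [hgn]; exact hm
end

section
/- Lemma 6.1: Let p_1, p_2 be two essentially distinct integral polynomials, each of degree ≥ 2. Then there exists a positive constant L, depending only on p_1 and p_2, such that whenever k_1, k_2 ∈ ℤ satisfy |k_1 − k_2| ≥ L, then for every pair (i_1,j_1) ≠ (i_2,j_2) in {1,2} × {1,2}, the one-variable polynomials n ↦ p_{i_1}(n + k_{j_1}) − p_{i_1}(k_{j_1}) and n ↦ p_{i_2}(n + k_{j_2}) − p_{i_2}(k_{j_2}) are essentially distinct. -/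
/-- Two integral polynomials are essentially distinct if their difference is not constant. -/
def EssDistinct (p q : ℤ → ℤ) : Prop :=
  ¬ ∃ c : ℤ, ∀ n : ℤ, p n - q n = c

open Polynomial

lemma pext {r s : ℚ[X]} (h : ∀ n : ℤ, r.eval (n:ℚ) = s.eval (n:ℚ)) : r = s := by
  refine Polynomial.eq_of_infinite_eval_eq _ _ ?_
  have hsub : Set.range ((↑·) : ℤ → ℚ) ⊆ {x | r.eval x = s.eval x} := by
    rintro _ ⟨n, rfl⟩; exact h n
  exact (Set.infinite_range_of_injective Int.cast_injective).mono hsub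

/-- shift relation transfer -/
lemma shift_rel {q q' : ℚ[X]} {a b c : ℚ}
    (h : q.comp (X + C a) - q'.comp (X + C b) = C c) :
    q.comp (X + C (a - b)) = q' + C c := by
  have h1 : (X + C a).comp (X - C b) = X + C (a - b) := by
    simp [add_comp]; ring
  have h2 : (X + C b).comp (X - C b) = X := by
    simp [add_comp]
  have h3 := congrArg (fun r : ℚ[X] => r.comp (X - C b)) h
  simp only [sub_comp, Polynomial.comp_assoc, h1, h2, C_comp, comp_X] at h3
  linear_combination (norm := ring_nf) h3

/-- a polynomial of degree ≥ 2 admits no nontrivial shift-by-constant relation -/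
lemma shiftB {q : ℚ[X]} (hd : 2 ≤ q.natDegree) {a c : ℚ}
    (h : q.comp (X + C a) = q + C c) : a = 0 := by
  by_contra ha
  have hder := congrArg Polynomial.derivative h
  rw [Polynomial.derivative_comp] at hder
  simp only [derivative_add, derivative_X, derivative_C, add_zero, mul_one] at hder
  set q' := Polynomial.derivative q with hq'
  have pe : ∀ x : ℚ, q'.eval (x + a) = q'.eval x := by
    intro x
    have := congrArg (Polynomial.eval x) hder
    simpa [eval_comp] using this
  have hroots : ∀ n : ℕ, q'.eval ((n : ℚ) * a) = q'.eval 0 := by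
    intro n
    induction n with
    | zero => simp
    | succ m ih => push_cast; rw [add_mul, one_mul, pe]; push_cast at ih; exact ih
  have hzero : q' - C (q'.eval 0) = 0 := by
    apply Polynomial.eq_zero_of_infinite_isRoot
    have hsub : Set.range (fun n : ℕ => (n : ℚ) * a) ⊆ {x | (q' - C (q'.eval 0)).IsRoot x} := by
      rintro _ ⟨n, rfl⟩
      simp [Polynomial.IsRoot, hroots n]
    refine (Set.infinite_range_of_injective ?_).mono hsub
    intro m n hmn
    simp only [mul_left_inj' ha] at hmn
    exact_mod_cast hmn
  have hq'C : q' = C (q'.eval 0) := by linear_combination (norm := ring_nf) hzero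
  have hd0 : Polynomial.derivative (q - C (q'.eval 0) * X) = 0 := by
    simp only [derivative_sub, derivative_mul, derivative_C, derivative_X, zero_mul,
      mul_one, zero_add, ← hq']
    exact hzero
  have := Polynomial.natDegree_eq_zero_of_derivative_eq_zero hd0
  obtain ⟨w, hw⟩ := Polynomial.natDegree_eq_zero.mp this
  have hq : q = C (q'.eval 0) * X + C w := by linear_combination (norm := ring_nf) hw.symm
  have : q.natDegree ≤ 1 := by rw [hq]; compute_degree
  omega

lemma shift_unique {q q' : ℚ[X]} (hd : 2 ≤ q.natDegree) {a a' c c' : ℚ}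
    (h : q.comp (X + C a) = q' + C c) (h' : q.comp (X + C a') = q' + C c') : a = a' := by
  have hsub : q.comp (X + C a) - q.comp (X + C a') = C (c - c') := by
    rw [h, h']; rw [show C (c - c') = C c - C c' from C_sub]; ring
  have := shiftB hd (shift_rel hsub)
  linarith

open scoped Classical in
/-- bound on the (at most one) integer shift relating `q` and `q'`. -/
noncomputable def badBound (q q' : ℚ[X]) : ℕ :=
  if h : ∃ m : ℤ, ∃ c : ℚ, q.comp (X + C (m:ℚ)) = q' + C c then h.choose.natAbs else 0

lemma badBound_eq {q q' : ℚ[X]} (hd : 2 ≤ q.natDegree) {m : ℤ} {c : ℚ}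
    (hm : q.comp (X + C (m:ℚ)) = q' + C c) : m.natAbs = badBound q q' := by
  have hex : ∃ m : ℤ, ∃ c : ℚ, q.comp (X + C (m:ℚ)) = q' + C c := ⟨m, c, hm⟩
  obtain ⟨c', hc'⟩ := hex.choose_spec
  have : (m : ℚ) = (hex.choose : ℚ) := shift_unique hd hm hc'
  have hmm : m = hex.choose := by exact_mod_cast this
  simp only [badBound]
  rw [dif_pos hex, hmm]

lemma toPoly {q q' : ℚ[X]} {pp pp' : ℤ → ℤ}
    (hq : ∀ n : ℤ, q.eval (n:ℚ) = (pp n : ℚ)) (hq' : ∀ n : ℤ, q'.eval (n:ℚ) = (pp' n : ℚ))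
    {a b c : ℤ} (h : ∀ n : ℤ, (pp (n + a) - pp a) - (pp' (n + b) - pp' b) = c) :
    q.comp (X + C (a:ℚ)) - q'.comp (X + C (b:ℚ)) = C ((pp a - pp' b + c : ℤ) : ℚ) := by
  apply pext
  intro n
  have h1 := hq (n + a)
  have h2 := hq' (n + b)
  have h3 : ((pp (n + a) : ℚ) - (pp a : ℚ)) - ((pp' (n + b) : ℚ) - (pp' b : ℚ)) = (c : ℚ) := by
    exact_mod_cast congrArg (Int.cast : ℤ → ℚ) (h n)
  simp only [eval_sub, eval_comp, eval_add, eval_X, eval_C]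
  push_cast at h1 h2 ⊢
  rw [h1, h2]
  linarith

/-- Lemma 6.1: here the two polynomials are `p 0` and `p 1`, and
`k 0`, `k 1` play the role of `k₁, k₂`. -/
theorem lemma61 (p : Fin 2 → ℤ → ℤ) (hpoly : ∀ i, IsIntPoly (p i))
    (hdeg : ∀ i, PolyDegGe (p i) 2) (hdist : EssDistinct (p 0) (p 1)) :
    ∃ L : ℕ, 0 < L ∧ ∀ k : Fin 2 → ℤ, (L : ℤ) ≤ |k 0 - k 1| →
      ∀ i₁ j₁ i₂ j₂ : Fin 2, (i₁, j₁) ≠ (i₂, j₂) →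
        EssDistinct (fun n : ℤ => p i₁ (n + k j₁) - p i₁ (k j₁))
          (fun n : ℤ => p i₂ (n + k j₂) - p i₂ (k j₂)) := by
  classical
  choose q hq hdq using hdeg
  refine ⟨badBound (q 0) (q 1) + badBound (q 1) (q 0) + 1, Nat.succ_pos _, ?_⟩
  intro k hk i₁ j₁ i₂ j₂ hne
  have h01 : ∀ i : Fin 2, i = 0 ∨ i = 1 := by decide
  rintro ⟨c, hc⟩
  have hc' : ∀ n : ℤ, (p i₁ (n + k j₁) - p i₁ (k j₁)) - (p i₂ (n + k j₂) - p i₂ (k j₂)) = c :=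
    fun n => by simpa using hc n
  have key := toPoly (hq i₁) (hq i₂) hc'
  set e : ℤ := p i₁ (k j₁) - p i₂ (k j₂) + c with he
  have key2 := shift_rel key
  have hL1 : (1:ℤ) ≤ |k 0 - k 1| := by
    refine le_trans ?_ hk
    exact_mod_cast Nat.one_le_iff_ne_zero.mpr (Nat.succ_ne_zero _)
  by_cases hij : i₁ = i₂
  · subst hij
    have hj : j₁ ≠ j₂ := fun h => hne (by rw [h])
    have h0 : (k j₁ : ℚ) - (k j₂ : ℚ) = 0 := shiftB (hdq i₁) key2
    have hkk : k j₁ = k j₂ := by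
      have : (k j₁ : ℚ) = (k j₂ : ℚ) := by linarith
      exact_mod_cast this
    have hkeq : k 0 = k 1 := by
      rcases h01 j₁ with rfl | rfl <;> rcases h01 j₂ with rfl | rfl <;>
        first | exact absurd rfl hj | exact hkk | exact hkk.symm
    rw [hkeq, sub_self, abs_zero] at hL1
    omega
  · by_cases hj : j₁ = j₂
    · subst hj
      rw [sub_self] at key2
      simp only [map_zero, add_zero, comp_X] at key2
      have heval : ∀ n : ℤ, p i₁ n - p i₂ n = e := by
        intro n
        have h4 := congrArg (Polynomial.eval (n:ℚ)) key2
        simp only [eval_add, eval_C, hq i₁ n, hq i₂ n] at h4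
        have : (p i₁ n : ℚ) - (p i₂ n : ℚ) = (e : ℚ) := by rw [h4]; ring
        exact_mod_cast this
      rcases h01 i₁ with rfl | rfl <;> rcases h01 i₂ with rfl | rfl <;>
        first
          | exact absurd rfl hij
          | exact hdist ⟨e, heval⟩
          | exact hdist ⟨-e, fun n => by have := heval n; omega⟩
    · have hPm : (q i₁).comp (X + C ((k j₁ - k j₂ : ℤ) : ℚ)) = q i₂ + C (e : ℚ) := by
        push_cast
        exact key2
      have hBeq := badBound_eq (hdq i₁) hPm
      have habs : |k j₁ - k j₂| = |k 0 - k 1| := by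
        rcases h01 j₁ with rfl | rfl <;> rcases h01 j₂ with rfl | rfl <;>
          first | exact absurd rfl hj | rfl | exact abs_sub_comm _ _
      have hBi : badBound (q i₁) (q i₂) = badBound (q 0) (q 1) ∨
          badBound (q i₁) (q i₂) = badBound (q 1) (q 0) := by
        rcases h01 i₁ with rfl | rfl <;> rcases h01 i₂ with rfl | rfl <;>
          first | exact absurd rfl hij | exact Or.inl rfl | exact Or.inr rfl
      simp only [Int.abs_eq_natAbs] at habs hk
      rcases hBi with hB | hB <;> rw [hB] at hBeq <;> omega
end

section
/- Lemma 6.2: Let A ⊆ ℤ² be piecewise syndetic and let B ⊆ ℤ². If for every M ∈ ℕ there exists n_M ∈ ℤ² such that n_M + (A ∩ [−M,M]²) ⊆ B, then B is piecewise syndetic in ℤ². -/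
/-- Lemma 6.2 -/
theorem lemma62 (A B : Set (ℤ × ℤ)) (hA : PiecewiseSyndeticZ2 A)
    (h : ∀ M : ℕ, ∃ nM : ℤ × ℤ, ∀ v ∈ A,
      v.1 ∈ Set.Icc (-(M : ℤ)) (M : ℤ) → v.2 ∈ Set.Icc (-(M : ℤ)) (M : ℤ) →
        nM + v ∈ B) :
    PiecewiseSyndeticZ2 B := by
  obtain ⟨F, hF⟩ := hA
  refine ⟨F, fun E => ?_⟩
  obtain ⟨g₀, hg₀⟩ := hF E
  set S : Finset (ℤ × ℤ) := (E ×ˢ F).image (fun p => g₀ + p.1 + p.2) with hS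
  set M : ℕ := S.sup (fun v => v.1.natAbs ⊔ v.2.natAbs) with hM
  obtain ⟨n, hn⟩ := h M
  refine ⟨n + g₀, fun f hf => ?_⟩
  obtain ⟨g', hg'F, hA'⟩ := hg₀ f hf
  have hvS : g₀ + f + g' ∈ S := by
    apply Finset.mem_image.2
    exact ⟨(f, g'), Finset.mem_product.2 ⟨hf, hg'F⟩, rfl⟩
  have hle : (g₀ + f + g').1.natAbs ⊔ (g₀ + f + g').2.natAbs ≤ M :=
    Finset.le_sup (f := fun v => v.1.natAbs ⊔ v.2.natAbs) hvS
  have h1 : (g₀ + f + g').1.natAbs ≤ M := le_trans le_sup_left hle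
  have h2 : (g₀ + f + g').2.natAbs ≤ M := le_trans le_sup_right hle
  have hb1 : (g₀ + f + g').1 ∈ Set.Icc (-(M : ℤ)) (M : ℤ) := by
    simp only [Set.mem_Icc]; omega
  have hb2 : (g₀ + f + g').2 ∈ Set.Icc (-(M : ℤ)) (M : ℤ) := by
    simp only [Set.mem_Icc]; omega
  refine ⟨g', hg'F, ?_⟩
  have := hn (g₀ + f + g') hA' hb1 hb2
  have heq : n + g₀ + f + g' = n + (g₀ + f + g') := by ring
  rwa [heq]
end

section
/- Lemma 6.5: Let E be a syndetic subset of ℤ². Then there exists m* ∈ ℤ such that the section E(m*) = {n ∈ ℤ : (m*, n) ∈ E} is piecewise syndetic in ℤ. -/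
/-- A subset `E` of ℤ² is syndetic if finitely many translates of `E` cover ℤ². -/
def SyndeticZ2 (E : Set (ℤ × ℤ)) : Prop :=
  ∃ K : Finset (ℤ × ℤ), ∀ x : ℤ × ℤ, ∃ g ∈ K, x + g ∈ E

lemma ps_union {A B : Set ℤ} (h : PiecewiseSyndeticZ (A ∪ B)) :
    PiecewiseSyndeticZ A ∨ PiecewiseSyndeticZ B := by
  obtain ⟨N, hN⟩ := h
  by_cases hA : PiecewiseSyndeticZ A
  · exact Or.inl hA
  · right
    refine ⟨N, fun L => ?_⟩
    have hnA : ¬ ThickZ {x : ℤ | ∃ i : ℕ, 1 ≤ i ∧ i ≤ L + N + 1 ∧ x + (i : ℤ) ∈ A} :=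
      fun h => hA ⟨L + N + 1, h⟩
    simp only [ThickZ, Set.mem_setOf_eq] at hnA
    push_neg at hnA
    obtain ⟨L0, hL0⟩ := hnA
    obtain ⟨a0, ha0⟩ := hN (L0 + (L + N + 1))
    obtain ⟨k, hk, hx⟩ := hL0 a0
    refine ⟨a0 + (k : ℤ) + 1, fun j hj => ?_⟩
    obtain ⟨i, hi1, hi2, hmem⟩ := ha0 (k + 1 + j) (by omega)
    have hnotA : a0 + ((k + 1 + j + i : ℕ) : ℤ) ∉ A := by
      have := hx (1 + j + i) (by omega) (by omega)
      have e : a0 + (k : ℤ) + ((1 + j + i : ℕ) : ℤ) = a0 + ((k + 1 + j + i : ℕ) : ℤ) := by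
        push_cast; ring
      rwa [e] at this
    have eB : a0 + ((k + 1 + j : ℕ) : ℤ) + (i : ℤ) = a0 + ((k + 1 + j + i : ℕ) : ℤ) := by
      push_cast; ring
    rw [eB] at hmem
    have hB : a0 + ((k + 1 + j + i : ℕ) : ℤ) ∈ B := hmem.resolve_left hnotA
    refine ⟨i, hi1, hi2, ?_⟩
    have e2 : a0 + (k : ℤ) + 1 + (j : ℤ) + (i : ℤ) = a0 + ((k + 1 + j + i : ℕ) : ℤ) := by
      push_cast; ring
    show a0 + (k : ℤ) + 1 + (j : ℤ) + (i : ℤ) ∈ B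
    rw [e2]; exact hB

lemma ps_biUnion {ι : Type*} (K : Finset ι) (f : ι → Set ℤ)
    (h : PiecewiseSyndeticZ (⋃ g ∈ K, f g)) : ∃ g ∈ K, PiecewiseSyndeticZ (f g) := by
  classical
  induction K using Finset.induction_on with
  | empty =>
    exfalso
    obtain ⟨N, hN⟩ := h
    obtain ⟨a, ha⟩ := hN 0
    obtain ⟨i, _, _, hm⟩ := ha 0 le_rfl
    simp at hm
  | insert _ _ hx ih =>
    rw [Finset.set_biUnion_insert] at h
    rcases ps_union h with h1 | h2
    · exact ⟨_, Finset.mem_insert_self _ _, h1⟩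
    · obtain ⟨g, hg, hps⟩ := ih h2
      exact ⟨g, Finset.mem_insert_of_mem hg, hps⟩

lemma ps_shift (t : ℤ) (T : Set ℤ) (h : PiecewiseSyndeticZ {n : ℤ | n + t ∈ T}) :
    PiecewiseSyndeticZ T := by
  obtain ⟨N, hN⟩ := h
  refine ⟨N, fun L => ?_⟩
  obtain ⟨a, ha⟩ := hN L
  refine ⟨a + t, fun k hk => ?_⟩
  obtain ⟨i, hi1, hi2, hm⟩ := ha k hk
  refine ⟨i, hi1, hi2, ?_⟩
  have e : a + t + (k : ℤ) + (i : ℤ) = a + (k : ℤ) + (i : ℤ) + t := by ring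
  show a + t + (k : ℤ) + (i : ℤ) ∈ T
  rw [e]; exact hm

/-- Lemma 6.5 -/
theorem lemma65 (E : Set (ℤ × ℤ)) (hE : SyndeticZ2 E) :
    ∃ m : ℤ, PiecewiseSyndeticZ {n : ℤ | (m, n) ∈ E} := by
  obtain ⟨K, hK⟩ := hE
  set f : ℤ × ℤ → Set ℤ := fun g => {b : ℤ | b + g.2 ∈ {n : ℤ | (g.1, n) ∈ E}} with hf
  have huniv : (⋃ g ∈ K, f g) = Set.univ := by
    rw [Set.eq_univ_iff_forall]
    intro b
    obtain ⟨g, hg, hmem⟩ := hK (0, b)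
    refine Set.mem_biUnion hg ?_
    have e : ((0 : ℤ), b) + g = (g.1, b + g.2) := by ext <;> simp
    rw [e] at hmem
    exact hmem
  have hps : PiecewiseSyndeticZ (⋃ g ∈ K, f g) := by
    rw [huniv]
    exact ⟨1, fun L => ⟨0, fun k _ => ⟨1, le_rfl, le_rfl, trivial⟩⟩⟩
  obtain ⟨g, hg, hpsg⟩ := ps_biUnion K f hps
  exact ⟨g.1, ps_shift g.2 _ hpsg⟩
end
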